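/- arXiv:1203.0990 — 7 statements merged into one kernel-verified Lean document; each statement's English description precedes it below -/
import Mathlib

section
/- Let 0 < p₁ < p₂ and set λ₀ = 1/√(p₁p₂), λ₁ = 2/p₂. For any n ≥ 2 with pₙ₊₁ > pₙ > 0 increasing (pₙ ≥ p₂ for n ≥ 2), if λ ≥ min{λ₀, λ₁} and λ·pₙ₊₁ ≥ 2, then G_{n+1}(λ) < λ·pₙ, where G_{n+1}(λ) = (λpₙ₊₁ - √(λ²pₙ₊₁² - 4))/2. -/
lemma aux_G_le (x : ℝ) (hx : 2 ≤ x) :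
    (x - Real.sqrt (x ^ 2 - 4)) / 2 ≤ 2 / x := by
  have hx0 : 0 < x := by linarith
  have h4 : 0 ≤ x ^ 2 - 4 := by nlinarith
  have hsq : (Real.sqrt (x ^ 2 - 4)) ^ 2 = x ^ 2 - 4 := Real.sq_sqrt h4
  have hsn : 0 ≤ Real.sqrt (x ^ 2 - 4) := Real.sqrt_nonneg _
  have hs : Real.sqrt (x ^ 2 - 4) ≤ x := by
    nlinarith [hsq, hsn]
  rw [div_le_div_iff₀ two_pos hx0]
  nlinarith [mul_le_mul_of_nonneg_left hs hsn]

/-- Let `0 < p₁ < p₂` with `(pₙ)` a strictly increasing positive sequence, and set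
`λ₀ = 1/√(p₁p₂)`, `λ₁ = 2/p₂`. For any `n ≥ 2`, if `λ ≥ min{λ₀, λ₁}` and
`λ·pₙ₊₁ ≥ 2`, then `G_{n+1}(λ) < λ·pₙ`, where
`G_{n+1}(λ) = (λpₙ₊₁ - √(λ²pₙ₊₁² - 4))/2`. -/
theorem stmt3 (p : ℕ → ℝ) (hpos : ∀ n, 1 ≤ n → 0 < p n)
    (hmono : ∀ m n, 1 ≤ m → m < n → p m < p n)
    (n : ℕ) (hn : 2 ≤ n) (lam : ℝ)
    (hlam : min (1 / Real.sqrt (p 1 * p 2)) (2 / p 2) ≤ lam)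
    (h2 : 2 ≤ lam * p (n + 1)) :
    (lam * p (n + 1) - Real.sqrt ((lam * p (n + 1)) ^ 2 - 4)) / 2 < lam * p n := by
  have hp1 : 0 < p 1 := hpos 1 le_rfl
  have hp2 : 0 < p 2 := hpos 2 (by omega)
  have h12 : p 1 < p 2 := hmono 1 2 le_rfl one_lt_two
  have hpn2 : p 2 ≤ p n := by
    rcases eq_or_lt_of_le hn with h | h
    · rw [← h]
    · exact (hmono 2 n (by omega) h).le
  have hq : 0 < p n := hpos n (by omega)
  have hnn1 : p n < p (n + 1) := hmono n (n + 1) (by omega) (by omega)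
  have hr : 0 < p (n + 1) := by linarith
  have hlam0 : 0 < lam := by nlinarith
  have hx2 : 0 < lam * p (n + 1) := by linarith
  have hG := aux_G_le (lam * p (n + 1)) h2
  have h1 : 2 / (lam * p (n + 1)) ≤ 1 := by
    rw [div_le_one hx2]; linarith
  by_cases hc : p (n + 1) < 2 * p n
  · have : 1 < lam * p n := by nlinarith
    linarith
  · push_neg at hc
    rcases le_or_gt (1 / Real.sqrt (p 1 * p 2)) (2 / p 2) with hm | hm
    · have hl0 : 1 / Real.sqrt (p 1 * p 2) ≤ lam := by
        rw [min_eq_left hm] at hlam; exact hlam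
      have hsp : 0 < Real.sqrt (p 1 * p 2) := Real.sqrt_pos.mpr (by positivity)
      have hsq : (Real.sqrt (p 1 * p 2)) ^ 2 = p 1 * p 2 :=
        Real.sq_sqrt (by positivity)
      have hls : 1 ≤ lam * Real.sqrt (p 1 * p 2) := by
        rw [div_le_iff₀ hsp] at hl0; linarith
      have hl2 : 1 ≤ lam ^ 2 * (p 1 * p 2) := by nlinarith
      have hkey : 2 / (lam * p (n + 1)) < lam * p n := by
        rw [div_lt_iff₀ hx2]
        nlinarith [mul_pos hq hr, sq_nonneg lam, mul_pos hp1 hp2,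
          mul_le_mul_of_nonneg_left hc hq.le]
      linarith
    · have hl1 : 2 / p 2 ≤ lam := by
        rw [min_eq_right hm.le] at hlam; exact hlam
      rw [div_le_iff₀ hp2] at hl1
      have : 2 ≤ lam * p n := by nlinarith
      linarith
end

section
/- With pₙ = 2(k² + n²a²)^{(2-β)/2}/(a k²) for 0 < β < 2 and integers a, k ≥ 1, any real λ satisfying 1/√(p₁p₂) < λ < 1/√(p₁p₂ - p₁²) obeys kᵝ/C_a ≤ λ ≤ C_a k^{1+β}/(2-β) for some constant C_a ≥ 1 independent of k. -/
set_option maxHeartbeats 1000000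

private lemma secant_rpow {γ : ℝ} (hγ0 : 0 < γ) (hγ1 : γ < 1) {t : ℝ} (ht1 : 1 ≤ t)
    (ht4 : t ≤ 4) : 1 + (4 ^ γ - 1) / 3 * (t - 1) ≤ t ^ γ := by
  have hc := (Real.strictConcaveOn_rpow hγ0 hγ1).concaveOn
  have h := hc.2 (show (1:ℝ) ∈ Set.Ici (0:ℝ) by norm_num)
    (show (4:ℝ) ∈ Set.Ici (0:ℝ) by norm_num)
    (show (0:ℝ) ≤ (4 - t)/3 by linarith) (show (0:ℝ) ≤ (t - 1)/3 by linarith)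
    (show (4 - t)/3 + (t - 1)/3 = 1 by ring)
  simp only [smul_eq_mul, Real.one_rpow] at h
  have ht : (4 - t)/3 * 1 + (t - 1)/3 * 4 = t := by ring
  rw [ht] at h
  nlinarith [h]

/-- With `pₙ = 2(k² + n²a²)^{(2-β)/2}/(a k²)` for `0 < β < 2` and integers `a, k ≥ 1`,
any real `λ` satisfying `1/√(p₁p₂) < λ < 1/√(p₁p₂ - p₁²)` obeys
`kᵝ/C_a ≤ λ ≤ C_a k^{1+β}/(2-β)` for some constant `C_a ≥ 1` independent of `k`. -/
theorem stmt5 (a : ℕ) (ha : 1 ≤ a) (β : ℝ) (hβ0 : 0 < β) (hβ2 : β < 2) :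
    ∃ C : ℝ, 1 ≤ C ∧ ∀ k : ℕ, 1 ≤ k → ∀ lam : ℝ,
      (let p : ℕ → ℝ := fun n =>
        2 * ((k : ℝ) ^ 2 + (n : ℝ) ^ 2 * (a : ℝ) ^ 2) ^ ((2 - β) / 2) / ((a : ℝ) * (k : ℝ) ^ 2)
       1 / Real.sqrt (p 1 * p 2) < lam ∧ lam < 1 / Real.sqrt (p 1 * p 2 - (p 1) ^ 2)) →
      (k : ℝ) ^ β / C ≤ lam ∧ lam ≤ C * (k : ℝ) ^ (1 + β) / (2 - β) := by
  set γ : ℝ := (2 - β) / 2 with hγdef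
  have hγ0 : 0 < γ := by rw [hγdef]; linarith
  have hγ1 : γ < 1 := by rw [hγdef]; linarith
  set A : ℝ := (a : ℝ) with hAdef
  have hA1 : (1:ℝ) ≤ A := by rw [hAdef]; exact_mod_cast ha
  have hA0 : 0 < A := by linarith
  set c : ℝ := (4 ^ γ - 1) / 3 with hcdef
  have hc0 : 0 < c := by
    have h4 : (4:ℝ) ^ (0:ℝ) < 4 ^ γ := Real.rpow_lt_rpow_of_exponent_lt (by norm_num) hγ0
    rw [Real.rpow_zero] at h4
    rw [hcdef]; linarith
  have hsc : 0 < Real.sqrt c := Real.sqrt_pos.mpr hc0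
  have hscsq : Real.sqrt c ^ 2 = c := Real.sq_sqrt hc0.le
  refine ⟨10 * A + A / Real.sqrt c, ?_, ?_⟩
  · have : 0 < A / Real.sqrt c := by positivity
    linarith
  set C : ℝ := 10 * A + A / Real.sqrt c with hCdef
  have hC10 : 10 * A ≤ C := by
    have : 0 < A / Real.sqrt c := by positivity
    rw [hCdef]; linarith
  have hC0 : 0 < C := by positivity
  have hCc : A ^ 2 ≤ c * C ^ 2 := by
    have h1 : A / Real.sqrt c ≤ C := by
      have : 0 < 10 * A := by linarith
      rw [hCdef]; linarith
    have h0 : 0 ≤ A / Real.sqrt c := by positivity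
    have h2 : (A / Real.sqrt c) * (A / Real.sqrt c) ≤ C * C :=
      mul_le_mul h1 h1 h0 hC0.le
    have h3 : (A / Real.sqrt c) * (A / Real.sqrt c) = A ^ 2 / c := by
      rw [div_mul_div_comm, ← sq, ← sq, hscsq]
    rw [h3, div_le_iff₀ hc0] at h2
    linarith [h2]
  intro k hk lam hlam
  obtain ⟨hlam1, hlam2⟩ := hlam
  norm_num at hlam1 hlam2
  set K : ℝ := (k : ℝ) with hKdef
  have hK1 : (1:ℝ) ≤ K := by rw [hKdef]; exact_mod_cast hk
  have hK0 : 0 < K := by linarith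
  set e : ℝ := K ^ (2 - β) with hedef
  have he0 : 0 < e := Real.rpow_pos_of_pos hK0 _
  have hK2γ : (K ^ 2) ^ γ = e := by
    rw [← Real.rpow_natCast K 2, ← Real.rpow_mul hK0.le, hedef]
    congr 1
    push_cast
    rw [hγdef]; ring
  have heβ : e * K ^ β = K ^ 2 := by
    rw [hedef, ← Real.rpow_add hK0, show (2 - β) + β = 2 by ring,
      show ((2:ℝ)) = ((2:ℕ):ℝ) by norm_num, Real.rpow_natCast]
  set X : ℝ := K ^ 2 + A ^ 2 with hXdef
  set Y : ℝ := K ^ 2 + 4 * A ^ 2 with hYdef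
  have hX0 : 0 < X := by rw [hXdef]; positivity
  have hY0 : 0 < Y := by rw [hYdef]; positivity
  set P1 : ℝ := 2 * X ^ γ / (A * K ^ 2) with hP1def
  set P2 : ℝ := 2 * Y ^ γ / (A * K ^ 2) with hP2def
  rw [inv_eq_one_div] at hlam1 hlam2
  clear_value γ A c C K e X Y P1 P2
  have hA2' : (1:ℝ) ≤ A ^ 2 := by
    linarith [mul_le_mul hA1 hA1 zero_le_one hA0.le]
  have hK2' : (1:ℝ) ≤ K ^ 2 := by
    linarith [mul_le_mul hK1 hK1 zero_le_one hK0.le]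
  have hAK1 : K ^ 2 ≤ A ^ 2 * K ^ 2 := by
    linarith [mul_le_mul_of_nonneg_right hA2' (sq_nonneg K)]
  have hAK2 : A ^ 2 ≤ A ^ 2 * K ^ 2 := by
    linarith [mul_le_mul_of_nonneg_left hK2' (sq_nonneg A)]
  have hXle : X ≤ 2 * A ^ 2 * K ^ 2 := by rw [hXdef]; linarith
  have hYle : Y ≤ 5 * A ^ 2 * K ^ 2 := by rw [hYdef]; linarith
  have hXγ_lb : e ≤ X ^ γ := by
    rw [← hK2γ]
    exact Real.rpow_le_rpow (by positivity) (by rw [hXdef]; linarith [sq_nonneg A]) hγ0.le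
  have hbig : (5 * A ^ 2 * K ^ 2 : ℝ) ^ γ ≤ 5 * A ^ 2 * e := by
    rw [Real.mul_rpow (by positivity) (by positivity),
        Real.mul_rpow (by positivity) (by positivity), hK2γ]
    have h5 : (5:ℝ) ^ γ ≤ 5 := by
      calc (5:ℝ) ^ γ ≤ 5 ^ (1:ℝ) := Real.rpow_le_rpow_of_exponent_le (by norm_num) hγ1.le
      _ = 5 := Real.rpow_one 5
    have hA2 : (A ^ 2 : ℝ) ^ γ ≤ A ^ 2 := by
      calc (A ^ 2 : ℝ) ^ γ ≤ (A ^ 2) ^ (1:ℝ) :=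
        Real.rpow_le_rpow_of_exponent_le hA2' hγ1.le
      _ = A ^ 2 := Real.rpow_one _
    have hA2p : (0:ℝ) < (A ^ 2 : ℝ) ^ γ := Real.rpow_pos_of_pos (by positivity) _
    have hmm : (5:ℝ) ^ γ * (A ^ 2) ^ γ ≤ 5 * A ^ 2 :=
      mul_le_mul h5 hA2 hA2p.le (by norm_num)
    have := mul_le_mul_of_nonneg_right hmm he0.le
    linarith
  have hXle5 : X ≤ 5 * A ^ 2 * K ^ 2 := by linarith [sq_nonneg (A * K)]
  have hXγ_ub : X ^ γ ≤ 5 * A ^ 2 * e :=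
    le_trans (Real.rpow_le_rpow hX0.le hXle5 hγ0.le) hbig
  have hYγ_ub : Y ^ γ ≤ 5 * A ^ 2 * e :=
    le_trans (Real.rpow_le_rpow hY0.le hYle hγ0.le) hbig
  have hXγ0 : 0 < X ^ γ := Real.rpow_pos_of_pos hX0 _
  have hYγ0 : 0 < Y ^ γ := Real.rpow_pos_of_pos hY0 _
  have hp1pos : 0 < P1 := by rw [hP1def]; positivity
  have hp2pos : 0 < P2 := by rw [hP2def]; positivity
  have hub : ∀ q : ℝ, 0 < q → q ≤ 5 * A ^ 2 * e →
      2 * q / (A * K ^ 2) ≤ C * e / K ^ 2 := by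
    intro q hq hqle
    rw [div_le_div_iff₀ (by positivity) (by positivity)]
    have h1 : q * K ^ 2 ≤ 5 * A ^ 2 * e * K ^ 2 :=
      mul_le_mul_of_nonneg_right hqle (sq_nonneg K)
    have h2 : 10 * A * (e * A * K ^ 2) ≤ C * (e * A * K ^ 2) :=
      mul_le_mul_of_nonneg_right hC10 (by positivity)
    linarith
  have hp1ub : P1 ≤ C * e / K ^ 2 := by rw [hP1def]; exact hub _ hXγ0 hXγ_ub
  have hp2ub : P2 ≤ C * e / K ^ 2 := by rw [hP2def]; exact hub _ hYγ0 hYγ_ub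
  constructor
  · -- lower bound for lam
    have hsqrt : Real.sqrt (P1 * P2) ≤ C * e / K ^ 2 := by
      have h1 : P1 * P2 ≤ (C * e / K ^ 2) ^ 2 := by
        have := mul_le_mul hp1ub hp2ub hp2pos.le (by positivity)
        calc P1 * P2 ≤ (C * e / K ^ 2) * (C * e / K ^ 2) := this
        _ = (C * e / K ^ 2) ^ 2 := (sq _).symm
      calc Real.sqrt (P1 * P2) ≤ Real.sqrt ((C * e / K ^ 2) ^ 2) := Real.sqrt_le_sqrt h1
      _ = C * e / K ^ 2 := Real.sqrt_sq (by positivity)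
    have hspos : 0 < Real.sqrt (P1 * P2) := Real.sqrt_pos.mpr (by positivity)
    have h2 : 1 / (C * e / K ^ 2) ≤ 1 / Real.sqrt (P1 * P2) :=
      one_div_le_one_div_of_le hspos hsqrt
    have h3 : 1 / (C * e / K ^ 2) = K ^ β / C := by
      rw [one_div_div, ← heβ]
      field_simp
    rw [h3] at h2
    linarith
  · -- upper bound for lam
    have hp1lb : 2 * e / (A * K ^ 2) ≤ P1 := by
      rw [hP1def, div_le_div_iff₀ (by positivity) (by positivity)]
      linarith [mul_le_mul_of_nonneg_right hXγ_lb (by positivity : (0:ℝ) ≤ A * K ^ 2)]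
    have hdiff : 3 * c * e / (A * K ^ 2 * K ^ 2) ≤ P2 - P1 := by
      have ht1 : 1 ≤ Y / X := by
        rw [le_div_iff₀ hX0, hXdef, hYdef]; linarith [sq_nonneg A]
      have ht4 : Y / X ≤ 4 := by
        rw [div_le_iff₀ hX0, hXdef, hYdef]; linarith [sq_nonneg K]
      have hsec := secant_rpow hγ0 hγ1 ht1 ht4
      rw [← hcdef] at hsec
      have hYγ : Y ^ γ = X ^ γ * (Y / X) ^ γ := by
        rw [← Real.mul_rpow hX0.le (by positivity)]
        congr 1
        field_simp
      have hYmX : Y / X - 1 = 3 * A ^ 2 / X := by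
        field_simp [hX0.ne']
        rw [hXdef, hYdef]; ring
      have hkey : c * (3 * A ^ 2) * (X ^ γ / X) ≤ Y ^ γ - X ^ γ := by
        rw [hYγ]
        have hm : X ^ γ * (1 + c * (Y / X - 1)) ≤ X ^ γ * (Y / X) ^ γ :=
          mul_le_mul_of_nonneg_left hsec hXγ0.le
        rw [hYmX] at hm
        have hexp : X ^ γ * (1 + c * (3 * A ^ 2 / X)) =
            X ^ γ + c * (3 * A ^ 2) * (X ^ γ / X) := by
          field_simp
        rw [hexp] at hm
        linarith
      have hXγX : e / (2 * A ^ 2 * K ^ 2) ≤ X ^ γ / X :=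
        div_le_div₀ hXγ0.le hXγ_lb hX0 hXle
      have hstep : 3 * c * e / (2 * K ^ 2) ≤ Y ^ γ - X ^ γ := by
        have h4 : c * (3 * A ^ 2) * (e / (2 * A ^ 2 * K ^ 2)) ≤
            c * (3 * A ^ 2) * (X ^ γ / X) :=
          mul_le_mul_of_nonneg_left hXγX (by positivity)
        have h5 : c * (3 * A ^ 2) * (e / (2 * A ^ 2 * K ^ 2)) = 3 * c * e / (2 * K ^ 2) := by
          field_simp
        rw [h5] at h4
        linarith
      have hstep' : 3 * c * e ≤ (Y ^ γ - X ^ γ) * (2 * K ^ 2) := by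
        rw [div_le_iff₀ (by positivity)] at hstep
        linarith
      have hsub : P2 - P1 = 2 * (Y ^ γ - X ^ γ) / (A * K ^ 2) := by
        rw [hP1def, hP2def]
        ring
      rw [hsub, div_le_div_iff₀ (by positivity) (by positivity)]
      linarith [mul_le_mul_of_nonneg_right hstep' (by positivity : (0:ℝ) ≤ A * K ^ 2)]
    set f : ℝ := K ^ (1 + β) with hfdef
    have hf0 : 0 < f := Real.rpow_pos_of_pos hK0 _
    have hef : e * f = K ^ 2 * K := by
      rw [hedef, hfdef, ← Real.rpow_add hK0, show (2 - β) + (1 + β) = 3 by ring,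
        show ((3:ℝ)) = ((3:ℕ):ℝ) by norm_num, Real.rpow_natCast]
      ring
    clear_value f
    have hkey2 : ((2 - β) / (C * f)) ^ 2 ≤ 6 * c * e ^ 2 / (A ^ 2 * (K ^ 2 * K) ^ 2) := by
      rw [div_pow, div_le_div_iff₀ (by positivity) (by positivity)]
      have h8' : e ^ 2 * f ^ 2 = (K ^ 2 * K) ^ 2 := by rw [← mul_pow, hef]
      have hb4 : (2 - β) ^ 2 ≤ 4 := by
        have hr : (2 - β) ^ 2 = 4 - β * (4 - β) := by ring
        have hnn : 0 ≤ β * (4 - β) := mul_nonneg hβ0.le (by linarith)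
        linarith
      have hS0 : (0:ℝ) ≤ A ^ 2 * (K ^ 2 * K) ^ 2 := by positivity
      have t1 : (2 - β) ^ 2 * (A ^ 2 * (K ^ 2 * K) ^ 2) ≤ 4 * (A ^ 2 * (K ^ 2 * K) ^ 2) :=
        mul_le_mul_of_nonneg_right hb4 hS0
      have t2 : A ^ 2 * (K ^ 2 * K) ^ 2 ≤ c * C ^ 2 * (K ^ 2 * K) ^ 2 :=
        mul_le_mul_of_nonneg_right hCc (sq_nonneg _)
      have t3 : (0:ℝ) ≤ c * C ^ 2 * (K ^ 2 * K) ^ 2 := by positivity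
      have t4 : 6 * c * e ^ 2 * (C * f) ^ 2 = 6 * (c * C ^ 2 * (K ^ 2 * K) ^ 2) := by
        rw [show 6 * c * e ^ 2 * (C * f) ^ 2 = 6 * (c * C ^ 2 * (e ^ 2 * f ^ 2)) by ring, h8']
      linarith
    have hq_lb : ((2 - β) / (C * f)) ^ 2 ≤ P1 * P2 - P1 ^ 2 := by
      have hmul : 2 * e / (A * K ^ 2) * (3 * c * e / (A * K ^ 2 * K ^ 2)) ≤ P1 * (P2 - P1) :=
        mul_le_mul hp1lb hdiff (by positivity) hp1pos.le
      calc ((2 - β) / (C * f)) ^ 2 ≤ 6 * c * e ^ 2 / (A ^ 2 * (K ^ 2 * K) ^ 2) := hkey2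
      _ = 2 * e / (A * K ^ 2) * (3 * c * e / (A * K ^ 2 * K ^ 2)) := by
          field_simp
          ring
      _ ≤ P1 * (P2 - P1) := hmul
      _ = P1 * P2 - P1 ^ 2 := by ring
    have hy0 : 0 ≤ P1 * P2 - P1 ^ 2 := le_trans (sq_nonneg _) hq_lb
    have hx0 : 0 ≤ (2 - β) / (C * f) := div_nonneg (by linarith) (by positivity)
    have hsq : (2 - β) / (C * f) ≤ Real.sqrt (P1 * P2 - P1 ^ 2) :=
      (Real.le_sqrt hx0 hy0).mpr hq_lb
    have h6 : 1 / Real.sqrt (P1 * P2 - P1 ^ 2) ≤ 1 / ((2 - β) / (C * f)) :=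
      one_div_le_one_div_of_le (div_pos (by linarith) (by positivity)) hsq
    rw [one_div_div] at h6
    linarith
end

section
/- Let (pₙ)_{n≥1} be a strictly increasing unbounded sequence of positive reals. Then there exists a real solution λ* of the continued fraction equation λp₁ = 1/(λp₂ - 1/(λp₃ - 1/(λp₄ - ...))) satisfying 1/√(p₁p₂) < λ* < 1/√(p₁p₂ - p₁²). -/
open Filter Topology

/-- `G_m(λ) = (λ p_m - √(λ² p_m² - 4))/2`. -/
noncomputable def cfG (p : ℕ → ℝ) (m : ℕ) (lam : ℝ) : ℝ :=
  (lam * p m - Real.sqrt ((lam * p m) ^ 2 - 4)) / 2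

/-- The truncated continued fraction
`F_{n,k}(λ) = 1/(λpₙ - 1/(λpₙ₊₁ - ... - 1/(λpₙ₊ₖ - G_{n+k+1}(λ))))`. -/
noncomputable def cfF (p : ℕ → ℝ) (lam : ℝ) : ℕ → ℕ → ℝ
  | n, 0 => 1 / (lam * p n - cfG p (n + 1) lam)
  | n, k + 1 => 1 / (lam * p n - cfF p lam (n + 1) k)
  termination_by n k => k

/-- The limit `Fₙ(λ)` of the truncated continued fractions (junk value if divergent). -/
noncomputable def FF (p : ℕ → ℝ) (lam : ℝ) (n : ℕ) : ℝ :=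
  limUnder atTop (fun k => cfF p lam n k)

lemma cfF_zero (p : ℕ → ℝ) (lam : ℝ) (n : ℕ) :
    cfF p lam n 0 = 1 / (lam * p n - cfG p (n + 1) lam) := by rw [cfF]

lemma cfF_succ (p : ℕ → ℝ) (lam : ℝ) (n k : ℕ) :
    cfF p lam n (k + 1) = 1 / (lam * p n - cfF p lam (n + 1) k) := by rw [cfF]

lemma cfG_pos {p : ℕ → ℝ} {m : ℕ} {lam : ℝ} (hx : 0 < lam * p m) :
    0 < cfG p m lam ∧ cfG p m lam ≤ 1 := by
  unfold cfG
  set x := lam * p m with hxdef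
  rcases le_or_gt (x ^ 2 - 4) 0 with h4 | h4
  · rw [Real.sqrt_eq_zero'.mpr h4]
    constructor
    · linarith
    · nlinarith
  · have hs0 : 0 ≤ Real.sqrt (x ^ 2 - 4) := Real.sqrt_nonneg _
    have hs : Real.sqrt (x ^ 2 - 4) ^ 2 = x ^ 2 - 4 := Real.sq_sqrt h4.le
    set s := Real.sqrt (x ^ 2 - 4)
    constructor
    · nlinarith
    · nlinarith

lemma cfG_anti {p : ℕ → ℝ} {m : ℕ} {lam lam' : ℝ} (h : 2 ≤ lam * p m)
    (h' : lam * p m ≤ lam' * p m) : cfG p m lam' ≤ cfG p m lam := by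
  unfold cfG
  set x := lam * p m with hx_def
  set y := lam' * p m with hy_def
  have hx2 : 0 ≤ x ^ 2 - 4 := by nlinarith
  have hy2 : 0 ≤ y ^ 2 - 4 := by nlinarith
  have hs0 : 0 ≤ Real.sqrt (x ^ 2 - 4) := Real.sqrt_nonneg _
  have ht0 : 0 ≤ Real.sqrt (y ^ 2 - 4) := Real.sqrt_nonneg _
  have hs : Real.sqrt (x ^ 2 - 4) ^ 2 = x ^ 2 - 4 := Real.sq_sqrt hx2
  have ht : Real.sqrt (y ^ 2 - 4) ^ 2 = y ^ 2 - 4 := Real.sq_sqrt hy2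
  set s := Real.sqrt (x ^ 2 - 4)
  set t := Real.sqrt (y ^ 2 - 4)
  have hsx : s ≤ x := by nlinarith
  have hty : t ≤ y := by nlinarith
  have key : (t - s) * (t + s) = (y - x) * (y + x) := by nlinarith
  rcases eq_or_lt_of_le (add_nonneg ht0 hs0) with heq | hpos
  · have ht' : t = 0 := by linarith
    have hs' : s = 0 := by linarith
    have hx4 : x ^ 2 = 4 := by nlinarith
    have hy4 : y ^ 2 = 4 := by nlinarith
    have hxx : x = 2 := by nlinarith
    have hyy : y = 2 := by nlinarith
    rw [ht', hs', hxx, hyy]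
  · have hyx : y - x ≤ t - s := by
      have h1 : t - s = (y - x) * (y + x) / (t + s) := (eq_div_iff hpos.ne').mpr key
      rw [h1, le_div_iff₀ hpos]
      have h2 : t + s ≤ y + x := by linarith
      calc (y - x) * (t + s) ≤ (y - x) * (y + x) :=
            mul_le_mul_of_nonneg_left h2 (by linarith)
        _ = (y - x) * (y + x) := rfl
    linarith

lemma cf_aux_contract {x u v : ℝ} (hx : 3 ≤ x) (hu0 : 0 < u) (hu1 : u ≤ 1)
    (hv0 : 0 < v) (hv1 : v ≤ 1) :
    |1 / (x - u) - 1 / (x - v)| ≤ |u - v| / 4 := by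
  have hxu : 0 < x - u := by linarith
  have hxv : 0 < x - v := by linarith
  have key : 1 / (x - u) - 1 / (x - v) = (u - v) / ((x - u) * (x - v)) := by
    rw [div_sub_div _ _ hxu.ne' hxv.ne']
    congr 1
    ring
  rw [key, abs_div, abs_of_pos (mul_pos hxu hxv)]
  rw [div_le_div_iff₀ (mul_pos hxu hxv) (by norm_num : (0:ℝ) < 4)]
  have h4 : (4:ℝ) ≤ (x - u) * (x - v) := by nlinarith
  calc |u - v| * 4 = 4 * |u - v| := by ring
    _ ≤ (x - u) * (x - v) * |u - v| := mul_le_mul_of_nonneg_right h4 (abs_nonneg _)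
    _ = |u - v| * ((x - u) * (x - v)) := by ring

section Tail

variable {p : ℕ → ℝ} {M : ℕ} {lam lam' : ℝ}

lemma tail_mem (h3 : ∀ m, M ≤ m → 3 ≤ lam * p m) :
    ∀ k n, M ≤ n → 1 / (lam * p n) ≤ cfF p lam n k ∧ cfF p lam n k ≤ 1 / 2 := by
  intro k
  induction k with
  | zero =>
    intro n hn
    rw [cfF_zero]
    have hx := h3 n hn
    have hx1 := h3 (n + 1) (by omega)
    obtain ⟨hg0, hg1⟩ := cfG_pos (show 0 < lam * p (n + 1) by linarith)
    constructor
    · exact one_div_le_one_div_of_le (by linarith) (by linarith)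
    · exact one_div_le_one_div_of_le (by norm_num) (by linarith)
  | succ k ih =>
    intro n hn
    rw [cfF_succ]
    have hx := h3 n hn
    have hx1 := h3 (n + 1) (by omega)
    obtain ⟨hu0, hu1⟩ := ih (n + 1) (by omega)
    have hupos : 0 < cfF p lam (n + 1) k := lt_of_lt_of_le (by positivity) hu0
    constructor
    · exact one_div_le_one_div_of_le (by linarith) (by linarith)
    · exact one_div_le_one_div_of_le (by norm_num) (by linarith)

lemma tail_diff (h3 : ∀ m, M ≤ m → 3 ≤ lam * p m) :
    ∀ k n, M ≤ n → |cfF p lam n (k + 1) - cfF p lam n k| ≤ (1 / 4) ^ k := by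
  intro k
  induction k with
  | zero =>
    intro n hn
    have hx := h3 n hn
    have hx1 := h3 (n + 1) (by omega)
    obtain ⟨hu0, hu1⟩ := tail_mem h3 0 (n + 1) (by omega)
    have hupos : 0 < cfF p lam (n + 1) 0 := lt_of_lt_of_le (by positivity) hu0
    obtain ⟨hg0, hg1⟩ := cfG_pos (show 0 < lam * p (n + 1) by linarith)
    rw [cfF_succ p lam n 0, cfF_zero p lam n]
    have h := cf_aux_contract hx hupos (by linarith) hg0 hg1
    have habs : |cfF p lam (n + 1) 0 - cfG p (n + 1) lam| ≤ 1 := by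
      rw [abs_le]
      constructor <;> linarith
    calc |1 / (lam * p n - cfF p lam (n + 1) 0) - 1 / (lam * p n - cfG p (n + 1) lam)|
        ≤ |cfF p lam (n + 1) 0 - cfG p (n + 1) lam| / 4 := h
      _ ≤ 1 / 4 := by linarith
      _ ≤ (1 / 4 : ℝ) ^ 0 := by norm_num
  | succ k ih =>
    intro n hn
    have hx := h3 n hn
    obtain ⟨hu0, hu1⟩ := tail_mem h3 (k + 1) (n + 1) (by omega)
    obtain ⟨hv0, hv1⟩ := tail_mem h3 k (n + 1) (by omega)
    have hx1 := h3 (n + 1) (by omega)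
    have hupos : 0 < cfF p lam (n + 1) (k + 1) := lt_of_lt_of_le (by positivity) hu0
    have hvpos : 0 < cfF p lam (n + 1) k := lt_of_lt_of_le (by positivity) hv0
    rw [cfF_succ p lam n (k + 1), cfF_succ p lam n k]
    have h := cf_aux_contract hx hupos (by linarith) hvpos (by linarith)
    have hih := ih (n + 1) (by omega)
    calc |1 / (lam * p n - cfF p lam (n + 1) (k + 1)) - 1 / (lam * p n - cfF p lam (n + 1) k)|
        ≤ |cfF p lam (n + 1) (k + 1) - cfF p lam (n + 1) k| / 4 := h
      _ ≤ (1 / 4) ^ k / 4 := by linarith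
      _ = (1 / 4 : ℝ) ^ (k + 1) := by ring

lemma tail_cauchy (h3 : ∀ m, M ≤ m → 3 ≤ lam * p m) {n : ℕ} (hn : M ≤ n) :
    CauchySeq (fun k => cfF p lam n k) := by
  apply cauchySeq_of_le_geometric (1 / 4) 1 (by norm_num)
  intro k
  rw [Real.dist_eq, abs_sub_comm, one_mul]
  exact tail_diff h3 k n hn

lemma tail_tendsto (h3 : ∀ m, M ≤ m → 3 ≤ lam * p m) {n : ℕ} (hn : M ≤ n) :
    Tendsto (fun k => cfF p lam n k) atTop (𝓝 (FF p lam n)) :=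
  (tail_cauchy h3 hn).tendsto_limUnder

lemma FF_mem (h3 : ∀ m, M ≤ m → 3 ≤ lam * p m) {n : ℕ} (hn : M ≤ n) :
    1 / (lam * p n) ≤ FF p lam n ∧ FF p lam n ≤ 1 / 2 :=
  ⟨ge_of_tendsto (tail_tendsto h3 hn) (Eventually.of_forall fun k => (tail_mem h3 k n hn).1),
   le_of_tendsto (tail_tendsto h3 hn) (Eventually.of_forall fun k => (tail_mem h3 k n hn).2)⟩

lemma step_tendsto {n : ℕ} {L : ℝ}
    (hT : Tendsto (fun k => cfF p lam (n + 1) k) atTop (𝓝 L))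
    (hd : 0 < lam * p n - L) :
    Tendsto (fun k => cfF p lam n k) atTop (𝓝 (1 / (lam * p n - L))) ∧
      FF p lam n = 1 / (lam * p n - L) := by
  have h1 : Tendsto (fun k => 1 / (lam * p n - cfF p lam (n + 1) k)) atTop
      (𝓝 (1 / (lam * p n - L))) :=
    Tendsto.div tendsto_const_nhds (tendsto_const_nhds.sub hT) hd.ne'
  have h2 : Tendsto (fun k => cfF p lam n (k + 1)) atTop (𝓝 (1 / (lam * p n - L))) := by
    simpa only [cfF_succ] using h1
  have h3 : Tendsto (fun k => cfF p lam n k) atTop (𝓝 (1 / (lam * p n - L))) :=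
    (tendsto_add_atTop_iff_nat (f := fun k => cfF p lam n k) 1).mp h2
  exact ⟨h3, h3.limUnder_eq⟩

lemma FF_eq_tail (h3 : ∀ m, M ≤ m → 3 ≤ lam * p m) {n : ℕ} (hn : M ≤ n) :
    0 < FF p lam n ∧ 0 < lam * p n - FF p lam (n + 1) ∧
      FF p lam n = 1 / (lam * p n - FF p lam (n + 1)) := by
  have hx := h3 n hn
  have hx1 := h3 (n + 1) (by omega)
  obtain ⟨hl, hu⟩ := FF_mem h3 hn
  obtain ⟨hl1, hu1⟩ := FF_mem h3 (show M ≤ n + 1 by omega)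
  have hd : 0 < lam * p n - FF p lam (n + 1) := by linarith
  refine ⟨lt_of_lt_of_le (by positivity) hl, hd, ?_⟩
  exact (step_tendsto (tail_tendsto h3 (by omega)) hd).2

lemma tail_anti (h3 : ∀ m, M ≤ m → 3 ≤ lam * p m) (hlam : 0 < lam) (hle : lam ≤ lam') :
    ∀ k n, M ≤ n → cfF p lam' n k ≤ cfF p lam n k := by
  have hp : ∀ m, M ≤ m → 0 < p m := by
    intro m hm
    have h := h3 m hm
    nlinarith
  have hmul : ∀ m, M ≤ m → lam * p m ≤ lam' * p m := fun m hm =>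
    mul_le_mul_of_nonneg_right hle (hp m hm).le
  have h3' : ∀ m, M ≤ m → 3 ≤ lam' * p m := fun m hm => le_trans (h3 m hm) (hmul m hm)
  intro k
  induction k with
  | zero =>
    intro n hn
    rw [cfF_zero, cfF_zero]
    have hg := cfG_anti (show 2 ≤ lam * p (n + 1) by linarith [h3 (n + 1) (by omega : M ≤ n + 1)])
      (hmul (n + 1) (by omega))
    obtain ⟨hg0, hg1⟩ := cfG_pos (show 0 < lam * p (n + 1) by linarith [h3 (n + 1) (by omega : M ≤ n + 1)])
    have hx := h3 n hn
    exact one_div_le_one_div_of_le (by linarith) (by linarith [hmul n hn])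
  | succ k ih =>
    intro n hn
    rw [cfF_succ, cfF_succ]
    have hih := ih (n + 1) (by omega)
    obtain ⟨hu0, hu1⟩ := tail_mem h3 k (n + 1) (by omega)
    have hx := h3 n hn
    have hx1 := h3 (n + 1) (by omega)
    exact one_div_le_one_div_of_le (by linarith) (by linarith [hmul n hn])

lemma FF_anti (h3 : ∀ m, M ≤ m → 3 ≤ lam * p m) (hlam : 0 < lam) (hle : lam ≤ lam')
    {n : ℕ} (hn : M ≤ n) : FF p lam' n ≤ FF p lam n := by
  have hp : ∀ m, M ≤ m → 0 < p m := by
    intro m hm; have h := h3 m hm; nlinarith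
  have h3' : ∀ m, M ≤ m → 3 ≤ lam' * p m := fun m hm =>
    le_trans (h3 m hm) (mul_le_mul_of_nonneg_right hle (hp m hm).le)
  exact le_of_tendsto_of_tendsto' (tail_tendsto h3' hn) (tail_tendsto h3 hn)
    (fun k => tail_anti h3 hlam hle k n hn)

lemma cfG_cont (p : ℕ → ℝ) (m : ℕ) : Continuous (fun lam => cfG p m lam) := by
  unfold cfG
  exact (((continuous_id.mul continuous_const)).sub
    (Real.continuous_sqrt.comp (((continuous_id.mul continuous_const).pow 2).sub
      continuous_const))).div_const 2

lemma cfF_contOn {a₀ : ℝ} (ha₀ : 0 < a₀) (h3 : ∀ m, M ≤ m → 3 ≤ a₀ * p m) :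
    ∀ k n, M ≤ n → ContinuousOn (fun lam => cfF p lam n k) (Set.Ici a₀) := by
  have hp : ∀ m, M ≤ m → 0 < p m := by
    intro m hm; have h := h3 m hm; nlinarith
  have hpt : ∀ lam, lam ∈ Set.Ici a₀ → ∀ m, M ≤ m → 3 ≤ lam * p m := by
    intro lam hlam m hm
    exact le_trans (h3 m hm) (mul_le_mul_of_nonneg_right hlam (hp m hm).le)
  intro k
  induction k with
  | zero =>
    intro n hn
    have heq : ∀ lam : ℝ, cfF p lam n 0 = 1 / (lam * p n - cfG p (n + 1) lam) :=
      fun lam => cfF_zero p lam n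
    apply ContinuousOn.congr (f := fun lam => 1 / (lam * p n - cfG p (n + 1) lam))
    · apply ContinuousOn.div continuousOn_const
      · exact ((continuous_id.mul continuous_const).sub (cfG_cont p (n + 1))).continuousOn
      · intro lam hlam
        have hx := hpt lam hlam n hn
        have hx1 := hpt lam hlam (n + 1) (by omega)
        obtain ⟨hg0, hg1⟩ := cfG_pos (show 0 < lam * p (n + 1) by linarith)
        intro h0
        simp only [sub_eq_zero] at h0
        linarith [h0 ▸ hg1]
    · intro lam _; exact heq lam
  | succ k ih =>
    intro n hn
    apply ContinuousOn.congr (f := fun lam => 1 / (lam * p n - cfF p lam (n + 1) k))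
    · apply ContinuousOn.div continuousOn_const
      · exact ((continuous_id.mul continuous_const).continuousOn).sub (ih (n + 1) (by omega))
      · intro lam hlam
        have hx := hpt lam hlam n hn
        obtain ⟨hu0, hu1⟩ := tail_mem (hpt lam hlam) k (n + 1) (by omega)
        intro h0
        rw [sub_eq_zero] at h0
        linarith [h0 ▸ hu1]
    · intro lam _; exact cfF_succ p lam n k
  
lemma FF_contOn {a₀ : ℝ} (ha₀ : 0 < a₀) (h3 : ∀ m, M ≤ m → 3 ≤ a₀ * p m)
    {n : ℕ} (hn : M ≤ n) : ContinuousOn (fun lam => FF p lam n) (Set.Ici a₀) := by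
  have hp : ∀ m, M ≤ m → 0 < p m := by
    intro m hm; have h := h3 m hm; nlinarith
  have hpt : ∀ lam, lam ∈ Set.Ici a₀ → ∀ m, M ≤ m → 3 ≤ lam * p m := by
    intro lam hlam m hm
    exact le_trans (h3 m hm) (mul_le_mul_of_nonneg_right hlam (hp m hm).le)
  have huc : TendstoUniformlyOn (fun k lam => cfF p lam n k) (fun lam => FF p lam n)
      atTop (Set.Ici a₀) := by
    rw [Metric.tendstoUniformlyOn_iff]
    intro ε hε
    have hge : Tendsto (fun k : ℕ => (4 / 3 : ℝ) * (1 / 4) ^ k) atTop (𝓝 0) := by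
      simpa using (tendsto_pow_atTop_nhds_zero_of_lt_one (by norm_num : (0:ℝ) ≤ 1/4)
        (by norm_num)).const_mul (4 / 3 : ℝ)
    filter_upwards [hge.eventually (gt_mem_nhds hε)] with k hk lam hlam
    have hd : dist (cfF p lam n k) (FF p lam n) ≤ 1 * (1 / 4) ^ k / (1 - 1 / 4) := by
      apply dist_le_of_le_geometric_of_tendsto (1 / 4) 1 (by norm_num)
      · intro i
        rw [Real.dist_eq, abs_sub_comm, one_mul]
        exact tail_diff (hpt lam hlam) i n hn
      · exact tail_tendsto (hpt lam hlam) hn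
    have heq : 1 * (1 / 4 : ℝ) ^ k / (1 - 1 / 4) = 4 / 3 * (1 / 4) ^ k := by ring
    calc dist (FF p lam n) (cfF p lam n k) = dist (cfF p lam n k) (FF p lam n) := dist_comm _ _
      _ ≤ 1 * (1 / 4) ^ k / (1 - 1 / 4) := hd
      _ = 4 / 3 * (1 / 4) ^ k := heq
      _ < ε := hk
  exact huc.continuousOn (Eventually.of_forall fun k => cfF_contOn ha₀ h3 k n hn).frequently

end Tail

set_option maxHeartbeats 2000000 in
/-- Let `(pₙ)_{n≥1}` be a strictly increasing unbounded sequence of positive reals.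
Then there exists a real solution `λ*` of the continued fraction equation
`λp₁ = 1/(λp₂ - 1/(λp₃ - 1/(λp₄ - ...)))` (interpreted as
`λ* p₁ = F₂(λ*) = lim_{k→∞} F_{2,k}(λ*)`) satisfying
`1/√(p₁p₂) < λ* < 1/√(p₁p₂ - p₁²)`. -/
theorem stmt6 (p : ℕ → ℝ) (hpos : ∀ n, 1 ≤ n → 0 < p n)
    (hmono : ∀ n, 1 ≤ n → p n < p (n + 1))
    (hunb : Tendsto p atTop atTop) :
    ∃ lam : ℝ,
      1 / Real.sqrt (p 1 * p 2) < lam ∧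
      lam < 1 / Real.sqrt (p 1 * p 2 - (p 1) ^ 2) ∧
      Tendsto (fun k : ℕ => cfF p lam 2 k) atTop (nhds (lam * p 1)) := by
  have hp1 : 0 < p 1 := hpos 1 le_rfl
  have hp2 : 0 < p 2 := hpos 2 (by norm_num)
  have hp12 : 0 < p 1 * p 2 := mul_pos hp1 hp2
  have hple : ∀ n m : ℕ, 1 ≤ n → n ≤ m → p n ≤ p m := by
    intro n m h1 hnm
    induction m, hnm using Nat.le_induction with
    | base => exact le_rfl
    | succ m hm ih => exact le_trans ih (hmono m (by omega)).le
  set a : ℝ := 1 / Real.sqrt (p 1 * p 2) with ha_def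
  have ha : 0 < a := by
    rw [ha_def]
    exact one_div_pos.mpr (Real.sqrt_pos.mpr hp12)
  have ha2 : a ^ 2 * (p 1 * p 2) = 1 := by
    rw [ha_def, div_pow, one_pow, Real.sq_sqrt hp12.le]
    field_simp
  set a₀ : ℝ := a / 2 with ha₀_def
  have ha₀ : 0 < a₀ := by rw [ha₀_def]; linarith
  have haa₀ : a = 2 * a₀ := by rw [ha₀_def]; ring
  obtain ⟨N₁, hN₁⟩ := eventually_atTop.mp (hunb.eventually_ge_atTop (3 / a₀))
  set N := max N₁ 3 with hN_def
  have hN3 : 3 ≤ N := le_max_right _ _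
  have h3 : ∀ m, N ≤ m → 3 ≤ a₀ * p m := by
    intro m hm
    have h := hN₁ m (le_trans (le_max_left _ _) hm)
    rw [div_le_iff₀ ha₀] at h
    linarith [mul_comm (p m) a₀, h]
  have h3lam : ∀ lam, a₀ ≤ lam → ∀ m, N ≤ m → 3 ≤ lam * p m := by
    intro lam hl m hm
    have hpm : 0 < p m := hpos m (by omega)
    exact le_trans (h3 m hm) (mul_le_mul_of_nonneg_right hl hpm.le)
  set S : Set ℝ := {lam | a₀ ≤ lam ∧ ∀ n, 2 ≤ n → n < N → 0 < lam * p n - FF p lam (n + 1)}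
    with hS_def
  have chainS : ∀ lam, lam ∈ S → ∀ j n, N = n + j → 2 ≤ n →
      Tendsto (fun k => cfF p lam n k) atTop (𝓝 (FF p lam n)) ∧ 0 < FF p lam n := by
    intro lam hlam j
    induction j with
    | zero =>
      intro n hn h2n
      have hnN : N ≤ n := by omega
      have h3l := h3lam lam hlam.1
      exact ⟨tail_tendsto h3l hnN, (FF_eq_tail h3l hnN).1⟩
    | succ j ih =>
      intro n hn h2n
      have hnext := ih (n + 1) (by omega) (by omega)
      have hd : 0 < lam * p n - FF p lam (n + 1) := hlam.2 n h2n (by omega)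
      have hst := step_tendsto hnext.1 hd
      constructor
      · rw [hst.2]; exact hst.1
      · rw [hst.2]; exact one_div_pos.mpr hd
  have eqS : ∀ lam, lam ∈ S → ∀ n, 2 ≤ n →
      0 < FF p lam n ∧ 0 < lam * p n - FF p lam (n + 1) ∧
        FF p lam n = 1 / (lam * p n - FF p lam (n + 1)) := by
    intro lam hlam n h2
    rcases lt_or_ge n N with hnN | hnN
    · have h1 := chainS lam hlam (N - n) n (by omega) h2
      have hd := hlam.2 n h2 hnN
      have h2' := chainS lam hlam (N - (n + 1)) (n + 1) (by omega) (by omega)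
      exact ⟨h1.2, hd, (step_tendsto h2'.1 hd).2⟩
    · exact FF_eq_tail (h3lam lam hlam.1) hnN
  have monoS : ∀ lam, lam ∈ S → ∀ lam', lam ≤ lam' →
      lam' ∈ S ∧ ∀ j n, N = n + j → 2 ≤ n → FF p lam' n ≤ FF p lam n := by
    intro lam hlam lam' hle
    have hl0 : 0 < lam := lt_of_lt_of_le ha₀ hlam.1
    have hl'a₀ : a₀ ≤ lam' := le_trans hlam.1 hle
    have R : ∀ j n, N = n + j → 2 ≤ n →
        FF p lam' n ≤ FF p lam n ∧
         Tendsto (fun k => cfF p lam' n k) atTop (𝓝 (FF p lam' n)) ∧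
         0 < FF p lam' n ∧
         ∀ n', n ≤ n' → n' < N → 0 < lam' * p n' - FF p lam' (n' + 1) := by
      intro j
      induction j with
      | zero =>
        intro n hn h2n
        have hnN : N ≤ n := by omega
        refine ⟨FF_anti (h3lam lam hlam.1) hl0 hle hnN,
          tail_tendsto (h3lam lam' hl'a₀) hnN,
          (FF_eq_tail (h3lam lam' hl'a₀) hnN).1, ?_⟩
        intro n' h h'
        omega
      | succ j ih =>
        intro n hn h2n
        obtain ⟨hFle, hT, hFpos, hconds⟩ := ih (n + 1) (by omega) (by omega)
        obtain ⟨hFp, hdl, heq⟩ := eqS lam hlam n h2n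
        have hpn : 0 < p n := hpos n (by omega)
        have hmm : lam * p n ≤ lam' * p n := mul_le_mul_of_nonneg_right hle hpn.le
        have hd' : 0 < lam' * p n - FF p lam' (n + 1) := by linarith
        have hst := step_tendsto hT hd'
        refine ⟨?_, ?_, ?_, ?_⟩
        · rw [hst.2, heq]
          exact one_div_le_one_div_of_le hdl (by linarith)
        · rw [hst.2]; exact hst.1
        · rw [hst.2]; exact one_div_pos.mpr hd'
        · intro n' h h'
          rcases eq_or_lt_of_le h with rfl | hlt
          · exact hd'
          · exact hconds n' (by omega) h'
    exact ⟨⟨hl'a₀, fun n h2 hnN => (R (N - n) n (by omega) h2).2.2.2 n le_rfl hnN⟩,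
      fun j n hj h2 => (R j n hj h2).1⟩
  have hbig : ∀ lam, a₀ ≤ lam → 3 / p 2 ≤ lam → lam ∈ S := by
    intro lam h1 h2
    have h3₂ : ∀ m, 2 ≤ m → 3 ≤ lam * p m := by
      intro m hm
      have hp2m : p 2 ≤ p m := hple 2 m (by norm_num) hm
      rw [div_le_iff₀ hp2] at h2
      have h0 : (0:ℝ) ≤ lam := by linarith
      nlinarith
    refine ⟨h1, ?_⟩
    intro n h2n hnN
    have hFF := (FF_mem h3₂ (show 2 ≤ n + 1 by omega)).2
    have hx := h3₂ n h2n
    linarith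
  have negpoint : ∃ lam₁, lam₁ ∈ S ∧ lam₁ * p 1 < FF p lam₁ 2 := by
    by_contra hcon
    push_neg at hcon
    have hSne : S.Nonempty := ⟨max a₀ (3 / p 2), hbig _ (le_max_left _ _) (le_max_right _ _)⟩
    have hbdd : BddBelow S := ⟨a₀, fun x hx => hx.1⟩
    set lc := sInf S with hlc_def
    have hlc_a₀ : a₀ ≤ lc := le_csInf hSne fun x hx => hx.1
    have hgtA : ∀ lam, lam ∈ S → a < lam := by
      intro lam hl
      by_contra hh
      push_neg at hh
      have hlam0 : 0 < lam := lt_of_lt_of_le ha₀ hl.1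
      obtain ⟨hF2pos, hd2, he2⟩ := eqS lam hl 2 le_rfl
      have hF3pos : 0 < FF p lam 3 := (eqS lam hl 3 (by norm_num)).1
      have h1 : 1 / (lam * p 2) < FF p lam 2 := by
        rw [he2]
        exact one_div_lt_one_div_of_lt hd2 (by linarith)
      have h2 : lam * p 1 ≤ 1 / (lam * p 2) := by
        rw [le_div_iff₀ (by positivity : 0 < lam * p 2)]
        have hsq : lam ^ 2 ≤ a ^ 2 := by nlinarith
        nlinarith
      linarith [hcon lam hl]
    have ha_lc : a ≤ lc := le_csInf hSne fun x hx => (hgtA x hx).le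
    have hmemgt : ∀ mu, lc < mu → mu ∈ S := by
      intro mu hmu
      obtain ⟨s', hs', hslt⟩ := exists_lt_of_csInf_lt hSne hmu
      exact (monoS s' hs' mu hslt.le).1
    set u : ℕ → ℝ := fun j => lc + 1 / ((j : ℝ) + 1) with hu_def
    have hu_pos : ∀ j : ℕ, (0:ℝ) < 1 / ((j:ℝ) + 1) := by intro j; positivity
    have hu_mem : ∀ j, u j ∈ S := fun j => hmemgt _ (lt_add_of_pos_right _ (hu_pos j))
    have hu_ge : ∀ j, lc ≤ u j := fun j => le_add_of_nonneg_right (hu_pos j).le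
    have hu_le : ∀ j, u j ≤ lc + 1 := by
      intro j
      have h1 : 1 / ((j:ℝ) + 1) ≤ 1 := by
        rw [div_le_one (by positivity)]
        linarith [Nat.cast_nonneg (α := ℝ) j]
      simp only [hu_def]
      linarith
    have hu_anti : ∀ j j' : ℕ, j ≤ j' → u j' ≤ u j := by
      intro j j' hj
      simp only [hu_def]
      have h1 : 1 / ((j':ℝ) + 1) ≤ 1 / ((j:ℝ) + 1) := by
        apply one_div_le_one_div_of_le (by positivity)
        have : (j:ℝ) ≤ (j':ℝ) := Nat.cast_le.mpr hj
        linarith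
      linarith
    have hu_tend : Tendsto u atTop (𝓝 lc) := by
      have h2 := tendsto_one_div_add_atTop_nhds_zero_nat.const_add lc
      simpa [hu_def, one_div] using h2
    have hfmono : ∀ n, 2 ≤ n → n ≤ N → Monotone (fun j => FF p (u j) n) := by
      intro n h2 hnN j j' hjj
      exact (monoS (u j') (hu_mem j') (u j) (hu_anti j j' hjj)).2 (N - n) n (by omega) h2
    have hbound : ∀ n, 2 ≤ n → n ≤ N → ∀ j, FF p (u j) n ≤ (lc + 1) * p (n - 1) := by
      intro n h2 hnN j
      rcases eq_or_lt_of_le h2 with heq | h2'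
      · rw [← heq]
        calc FF p (u j) 2 ≤ u j * p 1 := hcon (u j) (hu_mem j)
          _ ≤ (lc + 1) * p 1 := mul_le_mul_of_nonneg_right (hu_le j) hp1.le
      · have h1 : 2 ≤ n - 1 := by omega
        obtain ⟨hF, hd, he⟩ := eqS (u j) (hu_mem j) (n - 1) h1
        have hn1 : n - 1 + 1 = n := by omega
        rw [hn1] at hd
        have hpm : 0 < p (n - 1) := hpos (n - 1) (by omega)
        have hmm : u j * p (n - 1) ≤ (lc + 1) * p (n - 1) :=
          mul_le_mul_of_nonneg_right (hu_le j) hpm.le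
        linarith
    set L : ℕ → ℝ := fun n => ⨆ j, FF p (u j) n with hL_def
    have hbddA : ∀ n, 2 ≤ n → n ≤ N → BddAbove (Set.range fun j => FF p (u j) n) := by
      intro n h2 hnN
      refine ⟨(lc + 1) * p (n - 1), ?_⟩
      rintro x ⟨j, rfl⟩
      exact hbound n h2 hnN j
    have hLtend : ∀ n, 2 ≤ n → n ≤ N → Tendsto (fun j => FF p (u j) n) atTop (𝓝 (L n)) :=
      fun n h2 hnN => tendsto_atTop_ciSup (hfmono n h2 hnN) (hbddA n h2 hnN)
    have hL_ge : ∀ n, 2 ≤ n → n ≤ N → ∀ j, FF p (u j) n ≤ L n :=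
      fun n h2 hnN j => le_ciSup (hbddA n h2 hnN) j
    have hLpos : ∀ n, 2 ≤ n → n ≤ N → 0 < L n := fun n h2 hnN =>
      lt_of_lt_of_le (eqS (u 0) (hu_mem 0) n h2).1 (hL_ge n h2 hnN 0)
    have hLden : ∀ n, 2 ≤ n → n < N → 1 / L n ≤ lc * p n - L (n + 1) := by
      intro n h2 hnN
      have hLn := hLpos n h2 (by omega)
      have hpt : ∀ j, FF p (u j) (n + 1) ≤ u j * p n - 1 / L n := by
        intro j
        obtain ⟨hF, hd, he⟩ := eqS (u j) (hu_mem j) n h2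
        have hFle : FF p (u j) n ≤ L n := hL_ge n h2 (by omega) j
        have hq1 : 1 / L n ≤ 1 / FF p (u j) n := one_div_le_one_div_of_le hF hFle
        have hq2 : 1 / FF p (u j) n = u j * p n - FF p (u j) (n + 1) := by
          rw [he, one_div_one_div]
        linarith
      have hR : Tendsto (fun j => u j * p n - 1 / L n) atTop (𝓝 (lc * p n - 1 / L n)) :=
        (hu_tend.mul_const _).sub tendsto_const_nhds
      have hle2 := le_of_tendsto_of_tendsto' (hLtend (n + 1) (by omega) (by omega)) hR hpt
      linarith
    have hLN : L N = FF p lc N := by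
      have hc := FF_contOn (p := p) (M := N) ha₀ h3 le_rfl
      have hcw := hc lc (Set.mem_Ici.mpr hlc_a₀)
      have hin : Tendsto u atTop (𝓝[Set.Ici a₀] lc) :=
        tendsto_nhdsWithin_of_tendsto_nhds_of_eventually_within u hu_tend
          (Eventually.of_forall fun j => Set.mem_Ici.mpr (le_trans hlc_a₀ (hu_ge j)))
      have h2 := hcw.tendsto.comp hin
      exact tendsto_nhds_unique (hLtend N (by omega) le_rfl) h2
    have hQc : ∀ j n, N = n + j → 2 ≤ n →
        Tendsto (fun k => cfF p lc n k) atTop (𝓝 (FF p lc n)) ∧ 0 < FF p lc n ∧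
          FF p lc n ≤ L n ∧ ∀ n', n ≤ n' → n' < N → 0 < lc * p n' - FF p lc (n' + 1) := by
      intro j
      induction j with
      | zero =>
        intro n hn h2n
        have hnN : N ≤ n := by omega
        have hnN' : n = N := by omega
        refine ⟨tail_tendsto (h3lam lc hlc_a₀) hnN, (FF_eq_tail (h3lam lc hlc_a₀) hnN).1, ?_, ?_⟩
        · rw [hnN', hLN]
        · intro n' h h'; omega
      | succ j ih =>
        intro n hn h2n
        obtain ⟨hT, hFp, hFL, hconds⟩ := ih (n + 1) (by omega) (by omega)
        have hLn := hLpos n h2n (by omega)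
        have hden := hLden n h2n (by omega)
        have hinv : 0 < 1 / L n := by positivity
        have hd : 0 < lc * p n - FF p lc (n + 1) := by linarith
        have hst := step_tendsto hT hd
        refine ⟨?_, ?_, ?_, ?_⟩
        · rw [hst.2]; exact hst.1
        · rw [hst.2]; exact one_div_pos.mpr hd
        · rw [hst.2]
          have h1 : 1 / L n ≤ lc * p n - FF p lc (n + 1) := by linarith
          calc 1 / (lc * p n - FF p lc (n + 1)) ≤ 1 / (1 / L n) :=
                one_div_le_one_div_of_le hinv h1
            _ = L n := one_div_one_div _
        · intro n' h h'
          rcases eq_or_lt_of_le h with rfl | hlt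
          · exact hd
          · exact hconds n' (by omega) h'
    have hlcS : lc ∈ S := ⟨hlc_a₀, fun n h2 hnN => (hQc (N - n) n (by omega) h2).2.2.2 n le_rfl hnN⟩
    have hQ : ∀ j n, N = n + j → 2 ≤ n → ∀ δ : ℝ, 0 < δ → ∃ ε : ℝ, 0 < ε ∧ ε ≤ a₀ ∧
        ∀ mu, lc - ε ≤ mu → mu ≤ lc →
          Tendsto (fun k => cfF p mu n k) atTop (𝓝 (FF p mu n)) ∧ 0 < FF p mu n ∧
            |FF p mu n - FF p lc n| ≤ δ ∧
            ∀ n', n ≤ n' → n' < N → 0 < mu * p n' - FF p mu (n' + 1) := by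
      intro j
      induction j with
      | zero =>
        intro n hn h2n δ hδ
        have hnN : N ≤ n := by omega
        have hc := FF_contOn (p := p) (M := N) ha₀ h3 hnN
        have hcw := hc lc (Set.mem_Ici.mpr hlc_a₀)
        rw [Metric.continuousWithinAt_iff] at hcw
        obtain ⟨ε₀, hε₀, hball⟩ := hcw δ hδ
        refine ⟨min (ε₀ / 2) a₀, lt_min (by linarith) ha₀, min_le_right _ _, ?_⟩
        intro mu h1 h2'
        have h5 : min (ε₀ / 2) a₀ ≤ a₀ := min_le_right _ _
        have h6 : min (ε₀ / 2) a₀ ≤ ε₀ / 2 := min_le_left _ _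
        have hmua₀ : a₀ ≤ mu := by linarith
        have hdist : dist mu lc < ε₀ := by
          rw [Real.dist_eq, abs_lt]
          constructor <;> linarith
        have hb := hball (Set.mem_Ici.mpr hmua₀) hdist
        rw [Real.dist_eq] at hb
        refine ⟨tail_tendsto (h3lam mu hmua₀) hnN, (FF_eq_tail (h3lam mu hmua₀) hnN).1, hb.le, ?_⟩
        intro n' h h'; omega
      | succ j ih =>
        intro n hn h2n δ hδ
        obtain ⟨hFcp, hdc, hec⟩ := eqS lc hlcS n h2n
        set dc := lc * p n - FF p lc (n + 1) with hdc_def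
        have hpn : 0 < p n := hpos n (by omega)
        have hδ'pos : 0 < min (dc / 4) (δ * dc * dc / 4) :=
          lt_min (by positivity) (by positivity)
        set δ' := min (dc / 4) (δ * dc * dc / 4) with hδ'_def
        obtain ⟨ε₁, hε₁, hε₁a₀, hIH⟩ := ih (n + 1) (by omega) (by omega) δ' hδ'pos
        refine ⟨min ε₁ (δ' / p n), lt_min hε₁ (by positivity),
          le_trans (min_le_left _ _) hε₁a₀, ?_⟩
        intro mu h1 h2'
        have hm1 : min ε₁ (δ' / p n) ≤ ε₁ := min_le_left _ _
        have hm2 : min ε₁ (δ' / p n) ≤ δ' / p n := min_le_right _ _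
        have h1' : lc - ε₁ ≤ mu := by linarith
        obtain ⟨hT, hFmp, hdist', hconds⟩ := hIH mu h1' h2'
        have hmu_diff : |mu - lc| ≤ δ' / p n := by
          rw [abs_le]
          constructor <;> linarith
        have hA_eq : mu * p n - FF p mu (n + 1) - dc
            = (mu - lc) * p n - (FF p mu (n + 1) - FF p lc (n + 1)) := by
          rw [hdc_def]; ring
        have hA_diff : |mu * p n - FF p mu (n + 1) - dc| ≤ 2 * δ' := by
          rw [hA_eq]
          calc |(mu - lc) * p n - (FF p mu (n + 1) - FF p lc (n + 1))|
              ≤ |(mu - lc) * p n| + |FF p mu (n + 1) - FF p lc (n + 1)| := abs_sub _ _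
            _ ≤ δ' + δ' := by
                apply add_le_add _ hdist'
                rw [abs_mul, abs_of_pos hpn]
                calc |mu - lc| * p n ≤ (δ' / p n) * p n :=
                      mul_le_mul_of_nonneg_right hmu_diff hpn.le
                  _ = δ' := div_mul_cancel₀ _ hpn.ne'
            _ = 2 * δ' := by ring
        have hδ'dc : δ' ≤ dc / 4 := min_le_left _ _
        have hδ'δ : δ' ≤ δ * dc * dc / 4 := min_le_right _ _
        have habs := abs_le.mp hA_diff
        have hAmu : dc / 2 ≤ mu * p n - FF p mu (n + 1) := by linarith [habs.1]
        have hdmu : 0 < mu * p n - FF p mu (n + 1) := by linarith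
        have hst := step_tendsto hT hdmu
        refine ⟨?_, ?_, ?_, ?_⟩
        · rw [hst.2]; exact hst.1
        · rw [hst.2]; exact one_div_pos.mpr hdmu
        · rw [hst.2, hec]
          have hkey : 1 / (mu * p n - FF p mu (n + 1)) - 1 / dc
              = (dc - (mu * p n - FF p mu (n + 1))) / ((mu * p n - FF p mu (n + 1)) * dc) := by
            rw [div_sub_div _ _ hdmu.ne' hdc.ne']
            congr 1
            ring
          rw [hkey, abs_div, abs_of_pos (mul_pos hdmu hdc)]
          rw [div_le_iff₀ (mul_pos hdmu hdc)]
          have h6 : |dc - (mu * p n - FF p mu (n + 1))| ≤ 2 * δ' := by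
            rw [abs_sub_comm]; exact hA_diff
          nlinarith [h6, hδ'δ,
            mul_le_mul_of_nonneg_right (mul_le_mul_of_nonneg_left hAmu hδ.le) hdc.le]
        · intro n' h h'
          rcases eq_or_lt_of_le h with rfl | hlt
          · exact hdmu
          · exact hconds n' (by omega) h'
    obtain ⟨ε, hε, hεa₀, hQ2⟩ := hQ (N - 2) 2 (by omega) le_rfl 1 one_pos
    have hmu := hQ2 (lc - ε) le_rfl (by linarith)
    have hmuS : lc - ε ∈ S := by
      refine ⟨by linarith, fun n h2 hnN => hmu.2.2.2 n h2 hnN⟩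
    have hcontra := csInf_le hbdd hmuS
    rw [← hlc_def] at hcontra
    linarith
  obtain ⟨lam₁, hlam₁S, hneg⟩ := negpoint
  set lam₂ := max lam₁ (max (3 / p 2) (1 / p 1)) with hlam₂_def
  have hlam₁₂ : lam₁ ≤ lam₂ := le_max_left _ _
  have hlam₂S : lam₂ ∈ S := (monoS lam₁ hlam₁S lam₂ hlam₁₂).1
  have h3₂ : ∀ m, 2 ≤ m → 3 ≤ lam₂ * p m := by
    intro m hm
    have hp2m : p 2 ≤ p m := hple 2 m (by norm_num) hm
    have h2 : 3 / p 2 ≤ lam₂ := le_trans (le_max_left _ _) (le_max_right _ _)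
    rw [div_le_iff₀ hp2] at h2
    have h0 : (0:ℝ) ≤ lam₂ := le_trans ha₀.le hlam₂S.1
    nlinarith
  have hFF₂le : FF p lam₂ 2 ≤ 1 / 2 := (FF_mem h3₂ le_rfl).2
  have hl21 : 1 ≤ lam₂ * p 1 := by
    have h2 : 1 / p 1 ≤ lam₂ := le_trans (le_max_right _ _) (le_max_right _ _)
    rw [div_le_iff₀ hp1] at h2
    linarith [mul_comm (p 1) lam₂]
  have hg2 : FF p lam₂ 2 < lam₂ * p 1 := by linarith
  have hcont2 : ContinuousOn (fun lam => FF p lam 2) (Set.Ici lam₁) := by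
    have hCC : ∀ j n, N = n + j → 2 ≤ n →
        ContinuousOn (fun lam => FF p lam n) (Set.Ici lam₁) := by
      intro j
      induction j with
      | zero =>
        intro n hn h2n
        exact (FF_contOn ha₀ h3 (show N ≤ n by omega)).mono
          (fun x hx => Set.mem_Ici.mpr (le_trans hlam₁S.1 hx))
      | succ j ih =>
        intro n hn h2n
        have ihc := ih (n + 1) (by omega) (by omega)
        have hSx : ∀ lam, lam ∈ Set.Ici lam₁ → lam ∈ S :=
          fun lam hl => (monoS lam₁ hlam₁S lam hl).1
        apply ContinuousOn.congr (f := fun lam => 1 / (lam * p n - FF p lam (n + 1)))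
        · apply ContinuousOn.div continuousOn_const
          · exact ((continuous_id.mul continuous_const).continuousOn).sub ihc
          · intro lam hl
            exact (eqS lam (hSx lam hl) n h2n).2.1.ne'
        · intro lam hl
          exact (eqS lam (hSx lam hl) n h2n).2.2
    exact hCC (N - 2) 2 (by omega) le_rfl
  have hgcont : ContinuousOn (fun lam => lam * p 1 - FF p lam 2) (Set.Icc lam₁ lam₂) :=
    ((continuous_id.mul continuous_const).continuousOn).sub (hcont2.mono Set.Icc_subset_Ici_self)
  have h0mem : (0:ℝ) ∈ Set.Icc (lam₁ * p 1 - FF p lam₁ 2) (lam₂ * p 1 - FF p lam₂ 2) :=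
    Set.mem_Icc.mpr ⟨by linarith, by linarith⟩
  obtain ⟨ls, hlsmem, hls0⟩ := intermediate_value_Icc hlam₁₂ hgcont h0mem
  have hlsS : ls ∈ S := (monoS lam₁ hlam₁S ls hlsmem.1).1
  have hls_pos : 0 < ls := lt_of_lt_of_le ha₀ hlsS.1
  have hEq2 : FF p ls 2 = ls * p 1 := by
    have h9 : ls * p 1 - FF p ls 2 = 0 := hls0
    linarith
  obtain ⟨hF2pos, hd2, he2⟩ := eqS ls hlsS 2 le_rfl
  have hF3pos : 0 < FF p ls 3 := (eqS ls hlsS 3 (by norm_num)).1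
  have hstepA : ∀ m, 2 ≤ m → FF p ls m ≤ FF p ls (m + 1) →
      FF p ls (m + 1) < FF p ls (m + 2) := by
    intro m h2 hle
    obtain ⟨hA1, hA2, hA3⟩ := eqS ls hlsS m h2
    obtain ⟨hB1, hB2, hB3⟩ := eqS ls hlsS (m + 1) (by omega)
    have hAB : ls * p (m + 1) - FF p ls (m + 2) ≤ ls * p m - FF p ls (m + 1) := by
      by_contra hcc
      push_neg at hcc
      have h5 := one_div_lt_one_div_of_lt hA2 hcc
      rw [← hB3, ← hA3] at h5
      linarith
    have hpp : p m < p (m + 1) := hmono m (by omega)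
    have h0 : 0 < ls * (p (m + 1) - p m) := mul_pos hls_pos (by linarith)
    have h0' : ls * p m + ls * (p (m + 1) - p m) = ls * p (m + 1) := by ring
    linarith
  have hF32 : FF p ls 3 < FF p ls 2 := by
    by_contra hcon2
    push_neg at hcon2
    have hchain : ∀ j : ℕ, FF p ls 3 ≤ FF p ls (3 + j) ∧
        FF p ls (3 + j) < FF p ls (3 + j + 1) := by
      intro j
      induction j with
      | zero =>
        constructor
        · simp
        · have h := hstepA 2 le_rfl hcon2
          simpa using h
      | succ j ih =>
        have hs := hstepA (3 + j) (by omega) ih.2.le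
        constructor
        · have h1 : 3 + (j + 1) = 3 + j + 1 := by omega
          rw [h1]
          exact le_trans ih.1 ih.2.le
        · have h1 : 3 + (j + 1) = 3 + j + 1 := by omega
          rw [h1]
          exact hs
    obtain ⟨m, hmC, hmN⟩ := ((hunb.eventually_ge_atTop ((1 / 2 + 2 / FF p ls 3) / ls)).and
      (eventually_ge_atTop (N + 3))).exists
    have hF3le : FF p ls 3 ≤ FF p ls m := by
      have h := (hchain (m - 3)).1
      rwa [show 3 + (m - 3) = m by omega] at h
    obtain ⟨hE1, hE2', hE3⟩ := eqS ls hlsS m (by omega)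
    have hup : FF p ls (m + 1) ≤ 1 / 2 :=
      (FF_mem (h3lam ls hlsS.1) (show N ≤ m + 1 by omega)).2
    rw [div_le_iff₀ hls_pos] at hmC
    have hden : 2 / FF p ls 3 ≤ ls * p m - FF p ls (m + 1) := by
      have hcomm : ls * p m = p m * ls := mul_comm _ _
      linarith
    have hFm : FF p ls m ≤ FF p ls 3 / 2 := by
      rw [hE3]
      calc 1 / (ls * p m - FF p ls (m + 1)) ≤ 1 / (2 / FF p ls 3) :=
            one_div_le_one_div_of_le (by positivity) hden
        _ = FF p ls 3 / 2 := one_div_div _ _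
    linarith
  have hboundU : 1 < ls * p 1 * (ls * p 2) := by
    have h1 : 1 / (ls * p 2) < FF p ls 2 := by
      rw [he2]
      exact one_div_lt_one_div_of_lt hd2 (by linarith)
    rw [hEq2] at h1
    have hp2pos : 0 < ls * p 2 := by positivity
    rw [div_lt_iff₀ hp2pos] at h1
    linarith
  refine ⟨ls, ?_, ?_, ?_⟩
  · by_contra hc
    push_neg at hc
    have hsq : ls ^ 2 ≤ a ^ 2 := by nlinarith
    have h8 : ls ^ 2 * (p 1 * p 2) ≤ a ^ 2 * (p 1 * p 2) :=
      mul_le_mul_of_nonneg_right hsq hp12.le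
    nlinarith [ha2, hboundU]
  · have hD : 0 < p 1 * p 2 - p 1 ^ 2 := by nlinarith [hmono 1 le_rfl]
    have hb : 0 < 1 / Real.sqrt (p 1 * p 2 - p 1 ^ 2) :=
      one_div_pos.mpr (Real.sqrt_pos.mpr hD)
    have hb2 : (1 / Real.sqrt (p 1 * p 2 - p 1 ^ 2)) ^ 2 * (p 1 * p 2 - p 1 ^ 2) = 1 := by
      rw [div_pow, one_pow, Real.sq_sqrt hD.le]
      field_simp
      exact div_self (sub_pos.mpr (hmono 1 le_rfl)).ne'
    have hkey : ls ^ 2 * (p 1 * p 2 - p 1 ^ 2) < 1 := by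
      have hF3lt : FF p ls 3 < ls * p 1 := by rw [← hEq2]; exact hF32
      have h7 : ls * p 1 = 1 / (ls * p 2 - FF p ls 3) := by rw [← hEq2, he2]
      have hprod : ls * p 1 * (ls * p 2 - FF p ls 3) = 1 := by
        rw [h7]
        field_simp
      nlinarith [mul_lt_mul_of_pos_left hF3lt (mul_pos hls_pos hp1)]
    by_contra hc
    push_neg at hc
    have hsq : (1 / Real.sqrt (p 1 * p 2 - p 1 ^ 2)) ^ 2 ≤ ls ^ 2 := by nlinarith
    have h9 : (1 / Real.sqrt (p 1 * p 2 - p 1 ^ 2)) ^ 2 * (p 1 * p 2 - p 1 ^ 2)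
        ≤ ls ^ 2 * (p 1 * p 2 - p 1 ^ 2) := mul_le_mul_of_nonneg_right hsq hD.le
    linarith
  · have hT := (chainS ls hlsS (N - 2) 2 (by omega) le_rfl).1
    rw [hEq2] at hT
    exact hT
end

section
/- Let (pₙ) be strictly increasing positive reals with p₂ ≥ 4p₁, and suppose λ* solves λp₁ = F₂(λ) with 1/√(p₁p₂) < λ* and 1/(λpₙ) < Fₙ(λ*) < 2/(λ*pₙ) for n ≥ 2. Let n₀ ≥ 2 be such that p_{n₀} ≤ 2p₂ < p_{n₀+1}. Then cₙ = pₙFₙ(λ*)···F₂(λ*) satisfies |cₙ| ≤ p₂ for n ≤ n₀ and |cₙ| ≤ p₂·2^{n₀+1-n} for n ≥ n₀+1. -/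
/-- Let `(pₙ)` be strictly increasing positive reals with `p₂ ≥ 4p₁`, and suppose `λ*`
solves `λp₁ = F₂(λ)` with `1/√(p₁p₂) < λ*` and `1/(λ*pₙ) < Fₙ(λ*) < 2/(λ*pₙ)` for
`n ≥ 2`.  Let `n₀ ≥ 2` be such that `p_{n₀} ≤ 2p₂ < p_{n₀+1}`.  Then
`cₙ = pₙ Fₙ(λ*) ⋯ F₂(λ*)` satisfies `|cₙ| ≤ p₂` for `2 ≤ n ≤ n₀` and
`|cₙ| ≤ p₂ · 2^{n₀+1-n}` for `n ≥ n₀+1`. -/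
theorem stmt8 (p : ℕ → ℝ) (hpos : ∀ n, 1 ≤ n → 0 < p n)
    (hmono : ∀ n, 1 ≤ n → p n < p (n + 1))
    (h42 : 4 * p 1 ≤ p 2)
    (lam : ℝ) (F : ℕ → ℝ)
    (hsol : lam * p 1 = F 2)
    (hlam : 1 / Real.sqrt (p 1 * p 2) < lam)
    (hF : ∀ n, 2 ≤ n → 1 / (lam * p n) < F n ∧ F n < 2 / (lam * p n))
    (n₀ : ℕ) (hn₀ : 2 ≤ n₀) (hn₀1 : p n₀ ≤ 2 * p 2) (hn₀2 : 2 * p 2 < p (n₀ + 1)) :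
    (∀ n, 2 ≤ n → n ≤ n₀ → |p n * ∏ j ∈ Finset.Icc 2 n, F j| ≤ p 2) ∧
    (∀ n, n₀ + 1 ≤ n →
      |p n * ∏ j ∈ Finset.Icc 2 n, F j| ≤ p 2 * (2 : ℝ) ^ ((n₀ : ℤ) + 1 - (n : ℤ))) := by
  have hp1 : 0 < p 1 := hpos 1 le_rfl
  have hp2 : 0 < p 2 := hpos 2 (by norm_num)
  have hlam0 : 0 < lam := lt_trans (by positivity) hlam
  have hsq : 1 < lam ^ 2 * (p 1 * p 2) := by
    have hs : 0 < Real.sqrt (p 1 * p 2) := Real.sqrt_pos.mpr (by positivity)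
    have h1 : 1 < lam * Real.sqrt (p 1 * p 2) := by
      rw [div_lt_iff₀ hs] at hlam; linarith
    have h2 : Real.sqrt (p 1 * p 2) ^ 2 = p 1 * p 2 := Real.sq_sqrt (by positivity)
    nlinarith [h1, h2, hs]
  have hpm : ∀ m, 2 ≤ m → p 2 ≤ p m := by
    intro m hm
    induction m with
    | zero => omega
    | succ k ih =>
      rcases Nat.lt_or_ge k 2 with h | h
      · have : k = 1 := by omega
        subst this; exact le_rfl
      · exact le_trans (ih h) (le_of_lt (hmono k (by omega)))
  have hlp2 : 2 ≤ lam * p 2 := by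
    have h1 : (lam * lam * p 2) * (4 * p 1) ≤ (lam * lam * p 2) * p 2 :=
      mul_le_mul_of_nonneg_left h42 (by positivity)
    nlinarith [mul_pos hlam0 hp2, hsq]
  have hlampm : ∀ m, 2 ≤ m → 2 ≤ lam * p m := by
    intro m hm
    have h := hpm m hm
    calc (2:ℝ) ≤ lam * p 2 := hlp2
      _ ≤ lam * p m := mul_le_mul_of_nonneg_left h (le_of_lt hlam0)
  have hpm2 : ∀ m, n₀ + 1 ≤ m → 2 * p 2 < p m := by
    intro m hm
    induction m with
    | zero => omega
    | succ k ih =>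
      rcases Nat.lt_or_ge k (n₀ + 1) with h | h
      · have : k = n₀ := by omega
        subst this; exact hn₀2
      · exact lt_trans (ih h) (hmono k (by omega))
  have hlampm4 : ∀ m, n₀ + 1 ≤ m → 4 < lam * p m := by
    intro m hm
    have h := hpm2 m hm
    have h2 := hlampm 2 le_rfl
    nlinarith [hlam0, hp2]
  have hFpos : ∀ j, 2 ≤ j → 0 < F j := by
    intro j hj
    have := (hF j hj).1
    have hpj : 0 < p j := hpos j (by omega)
    have : 0 < 1 / (lam * p j) := by positivity
    linarith [(hF j hj).1]
  have hPpos : ∀ n, 0 < ∏ j ∈ Finset.Icc 2 n, F j := by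
    intro n
    apply Finset.prod_pos
    intro j hj
    exact hFpos j (Finset.mem_Icc.mp hj).1
  have hcpos : ∀ n, 2 ≤ n → 0 < p n * ∏ j ∈ Finset.Icc 2 n, F j := by
    intro n hn
    exact mul_pos (hpos n (by omega)) (hPpos n)
  -- step inequality
  have hstep : ∀ m, 2 ≤ m →
      p (m+1) * ∏ j ∈ Finset.Icc 2 (m+1), F j ≤
      (2 / (lam * p m)) * (p m * ∏ j ∈ Finset.Icc 2 m, F j) := by
    intro m hm
    rw [Finset.prod_Icc_succ_top (by omega : 2 ≤ m + 1)]
    have hF1 := (hF (m+1) (by omega)).2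
    have hpm1 : 0 < p (m+1) := hpos _ (by omega)
    have hpmp : 0 < p m := hpos _ (by omega)
    have hP := hPpos m
    have key : p (m+1) * F (m+1) ≤ 2 / lam := by
      rw [lt_div_iff₀ (mul_pos hlam0 hpm1)] at hF1
      rw [le_div_iff₀ hlam0]
      nlinarith
    calc p (m+1) * ((∏ j ∈ Finset.Icc 2 m, F j) * F (m+1))
        = (p (m+1) * F (m+1)) * ∏ j ∈ Finset.Icc 2 m, F j := by ring
      _ ≤ (2 / lam) * ∏ j ∈ Finset.Icc 2 m, F j :=
          mul_le_mul_of_nonneg_right key (le_of_lt hP)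
      _ = (2 / (lam * p m)) * (p m * ∏ j ∈ Finset.Icc 2 m, F j) := by
          field_simp
  -- weak decrease
  have hdec : ∀ m, 2 ≤ m →
      p (m+1) * ∏ j ∈ Finset.Icc 2 (m+1), F j ≤ p m * ∏ j ∈ Finset.Icc 2 m, F j := by
    intro m hm
    refine le_trans (hstep m hm) ?_
    have h2 : 2 ≤ lam * p m := hlampm m hm
    have hc := hcpos m hm
    have : 2 / (lam * p m) ≤ 1 := by
      rw [div_le_one (by linarith)]; linarith
    nlinarith
  -- halving
  have hhalf : ∀ m, n₀ + 1 ≤ m →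
      p (m+1) * ∏ j ∈ Finset.Icc 2 (m+1), F j ≤
      (p m * ∏ j ∈ Finset.Icc 2 m, F j) / 2 := by
    intro m hm
    refine le_trans (hstep m (by omega)) ?_
    have h4 : 4 < lam * p m := hlampm4 m hm
    have hc := hcpos m (by omega)
    have : 2 / (lam * p m) ≤ 1 / 2 := by
      rw [div_le_div_iff₀ (by linarith) (by norm_num)]; linarith
    nlinarith
  -- base case c₂ ≤ p₂
  have hc2 : p 2 * ∏ j ∈ Finset.Icc 2 2, F j ≤ p 2 := by
    rw [Finset.Icc_self, Finset.prod_singleton, ← hsol]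
    have hF2 := (hF 2 le_rfl).2
    rw [← hsol] at hF2
    -- λ p₁ < 2/(λ p₂) ⇒ λ² p₁ p₂ < 2
    rw [lt_div_iff₀ (mul_pos hlam0 hp2)] at hF2
    have hlp1 : lam * p 1 ≤ 1 := by nlinarith [mul_pos hlam0 hp1, hlp2]
    nlinarith
  -- all n ≥ 2 : cₙ ≤ p₂
  have hall : ∀ n, 2 ≤ n → p n * ∏ j ∈ Finset.Icc 2 n, F j ≤ p 2 := by
    intro n hn
    induction n with
    | zero => omega
    | succ k ih =>
      rcases Nat.lt_or_ge k 2 with h | h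
      · have : k = 1 := by omega
        subst this; exact hc2
      · exact le_trans (hdec k h) (ih h)
  constructor
  · intro n hn _
    rw [abs_of_pos (hcpos n hn)]
    exact hall n hn
  · intro n hn
    induction n with
    | zero => omega
    | succ k ih =>
      rcases Nat.lt_or_ge k (n₀ + 1) with h | h
      · have hk : k = n₀ := by omega
        rw [abs_of_pos (hcpos _ (by omega))]
        have hz : ((n₀ : ℤ) + 1 - ((k + 1 : ℕ) : ℤ)) = 0 := by omega
        rw [hz, zpow_zero, mul_one]
        exact hall _ (by omega)
      · have ihk := ih h
        rw [abs_of_pos (hcpos k (by omega))] at ihk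
        rw [abs_of_pos (hcpos _ (by omega))]
        refine le_trans (hhalf k h) ?_
        have hz : ((n₀ : ℤ) + 1 - ((k + 1 : ℕ) : ℤ)) = ((n₀ : ℤ) + 1 - (k : ℤ)) - 1 := by
          push_cast; ring
        rw [hz, zpow_sub_one₀ (by norm_num : (2:ℝ) ≠ 0)]
        have h2 : (0:ℝ) < 2 := by norm_num
        calc (p k * ∏ j ∈ Finset.Icc 2 k, F j) / 2
            ≤ (p 2 * (2:ℝ) ^ ((n₀ : ℤ) + 1 - (k : ℤ))) / 2 := by linarith
          _ = p 2 * ((2:ℝ) ^ ((n₀ : ℤ) + 1 - (k : ℤ)) / 2) := by ring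
          _ = p 2 * ((2:ℝ) ^ ((n₀ : ℤ) + 1 - (k : ℤ)) * 2⁻¹) := by rw [div_eq_mul_inv]
end

section
/- Let s ≥ 0, and let (cₙ)_{n≥1} be a real sequence with |cₙ| ≤ M for n ≤ N and |cₙ| ≤ M·2^{N+1-n} for n > N, where M = |c_{n₁}|·K for some index n₁ and constant K ≥ 1. Then ‖nˢcₙ‖_{ℓ²} ≤ C(Nˢ + K)‖cₙ‖_{ℓ²} for a universal constant C. -/
lemma aux_rpow_bound (s : ℝ) (hs : 0 ≤ s) :
    ∃ D : ℝ, 1 ≤ D ∧ ∀ n : ℕ, ((n : ℝ) ^ s) ^ 2 ≤ D * (2 : ℝ) ^ ((n : ℝ) / 4) := by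
  set t : ℝ := max 1 (8 * s / Real.log 2) with ht
  have ht1 : 1 ≤ t := le_max_left _ _
  have ht0 : 0 < t := lt_of_lt_of_le one_pos ht1
  have hlog2 : 0 < Real.log 2 := Real.log_pos (by norm_num)
  refine ⟨(t ^ s) ^ 2, ?_, ?_⟩
  · have h1 : 1 ≤ t ^ s := Real.one_le_rpow ht1 hs
    nlinarith
  intro n
  have hpow1 : (1 : ℝ) ≤ (2 : ℝ) ^ ((n : ℝ) / 4) :=
    Real.one_le_rpow (by norm_num) (by positivity)
  have hts : 0 ≤ t ^ s := Real.rpow_nonneg ht0.le s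
  rcases le_or_gt (n : ℝ) t with h | h
  · have h1 : ((n : ℝ)) ^ s ≤ t ^ s := Real.rpow_le_rpow (Nat.cast_nonneg n) h hs
    have h0 : (0 : ℝ) ≤ (n : ℝ) ^ s := Real.rpow_nonneg (Nat.cast_nonneg n) s
    nlinarith
  · have hn0 : (0 : ℝ) < n := lt_trans ht0 h
    have hnt1 : (1 : ℝ) ≤ (n : ℝ) / t := (one_le_div ht0).2 h.le
    have hnt0 : (0 : ℝ) < (n : ℝ) / t := lt_of_lt_of_le one_pos hnt1
    -- (n/t)^s ≤ exp (s * (n/t))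
    have key1 : ((n : ℝ) / t) ^ s ≤ Real.exp (s * ((n : ℝ) / t)) := by
      rw [Real.rpow_def_of_pos hnt0]
      apply Real.exp_le_exp.2
      have hl : Real.log ((n : ℝ) / t) ≤ (n : ℝ) / t :=
        le_trans (Real.log_le_sub_one_of_pos hnt0) (by linarith)
      nlinarith [Real.log_nonneg hnt1]
    -- s / t ≤ log 2 / 8
    have hst : s * ((n : ℝ) / t) ≤ Real.log 2 * ((n : ℝ) / 8) := by
      have h2 : 8 * s / Real.log 2 ≤ t := le_max_right _ _
      have h3 : 8 * s ≤ Real.log 2 * t := by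
        rw [div_le_iff₀ hlog2] at h2; linarith
      have hn8 : (0:ℝ) ≤ (n:ℝ) := hn0.le
      rw [mul_div_assoc', mul_div_assoc', div_le_div_iff₀ ht0 (by norm_num : (0:ℝ) < 8)]
      nlinarith
    have key2 : Real.exp (s * ((n : ℝ) / t)) ≤ (2 : ℝ) ^ ((n : ℝ) / 8) := by
      rw [Real.rpow_def_of_pos two_pos]
      exact Real.exp_le_exp.2 hst
    have hsplit : (n : ℝ) ^ s = t ^ s * ((n : ℝ) / t) ^ s := by
      rw [← Real.mul_rpow ht0.le hnt0.le, mul_div_cancel₀ _ (ne_of_gt ht0)]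
    have hnts : ((n : ℝ) / t) ^ s ≤ (2 : ℝ) ^ ((n : ℝ) / 8) := le_trans key1 key2
    have hnts0 : 0 ≤ ((n : ℝ) / t) ^ s := Real.rpow_nonneg hnt0.le s
    have hsq : ((2 : ℝ) ^ ((n : ℝ) / 8)) ^ 2 = (2 : ℝ) ^ ((n : ℝ) / 4) := by
      rw [sq, ← Real.rpow_add two_pos]; ring_nf
    calc ((n : ℝ) ^ s) ^ 2 = (t ^ s) ^ 2 * (((n : ℝ) / t) ^ s) ^ 2 := by
          rw [hsplit]; ring
      _ ≤ (t ^ s) ^ 2 * ((2 : ℝ) ^ ((n : ℝ) / 8)) ^ 2 := by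
          have hx2 : (((n : ℝ) / t) ^ s) ^ 2 ≤ ((2 : ℝ) ^ ((n : ℝ) / 8)) ^ 2 := by nlinarith
          exact mul_le_mul_of_nonneg_left hx2 (sq_nonneg _)
      _ = (t ^ s) ^ 2 * (2 : ℝ) ^ ((n : ℝ) / 4) := by rw [hsq]

set_option maxHeartbeats 1000000 in
/-- Let `s ≥ 0`, and let `(cₙ)_{n≥1}` be a real sequence with `|cₙ| ≤ M` for `n ≤ N`
and `|cₙ| ≤ M·2^{N+1-n}` for `n > N`, where `M = |c_{n₁}|·K` for some index `n₁` and a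
constant `K ≥ 1`.  Then `‖nˢcₙ‖_{ℓ²} ≤ C(Nˢ + K)‖cₙ‖_{ℓ²}` for a constant `C`
depending only on `s`. -/
theorem stmt9 (s : ℝ) (hs : 0 ≤ s) :
    ∃ C > (0 : ℝ), ∀ (c : ℕ → ℝ) (N n₁ : ℕ) (M K : ℝ),
      1 ≤ K → 1 ≤ N → 1 ≤ n₁ → c 0 = 0 →
      M = |c n₁| * K →
      (∀ n, 1 ≤ n → n ≤ N → |c n| ≤ M) →
      (∀ n, N < n → |c n| ≤ M * (2 : ℝ) ^ ((N : ℤ) + 1 - (n : ℤ))) →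
      Summable (fun n : ℕ => (c n) ^ 2) →
      Summable (fun n : ℕ => ((n : ℝ) ^ s * c n) ^ 2) →
      Real.sqrt (∑' n : ℕ, ((n : ℝ) ^ s * c n) ^ 2) ≤
        C * ((N : ℝ) ^ s + K) * Real.sqrt (∑' n : ℕ, (c n) ^ 2) := by
  obtain ⟨D, hD1, hD⟩ := aux_rpow_bound s hs
  have hD0 : (0 : ℝ) < D := lt_of_lt_of_le one_pos hD1
  set r : ℝ := (2 : ℝ) ^ (-(3 : ℝ) / 4) with hrdef
  have hr0 : 0 < r := Real.rpow_pos_of_pos two_pos _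
  have hr1 : r < 1 := Real.rpow_lt_one_of_one_lt_of_neg (by norm_num) (by norm_num)
  have hinv : 0 < (1 - r)⁻¹ := inv_pos.2 (by linarith)
  set C0 : ℝ := ((2 : ℝ) ^ s) ^ 2 + 4 * D * (1 - r)⁻¹ with hC0def
  have h2s : (0 : ℝ) < (2 : ℝ) ^ s := Real.rpow_pos_of_pos two_pos s
  have hC0 : 0 < C0 := by
    have h1 := pow_pos h2s 2
    have h2 := mul_pos (mul_pos (by norm_num : (0:ℝ) < 4) hD0) hinv
    rw [hC0def]; linarith
  refine ⟨Real.sqrt C0, Real.sqrt_pos.2 hC0, ?_⟩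
  intro c N n₁ M K hK hN hn₁ hc0 hM hpl htail hS hT
  set S : ℝ := ∑' n : ℕ, (c n) ^ 2 with hSdef
  have hS0 : 0 ≤ S := tsum_nonneg fun n => sq_nonneg _
  have hNs0 : 0 ≤ (N : ℝ) ^ s := Real.rpow_nonneg (Nat.cast_nonneg N) s
  -- M^2 ≤ K^2 * S
  have hM2 : M ^ 2 ≤ K ^ 2 * S := by
    have h1 : (c n₁) ^ 2 ≤ S := hS.le_tsum n₁ fun j _ => sq_nonneg _
    have : M ^ 2 = (c n₁) ^ 2 * K ^ 2 := by rw [hM, mul_pow, sq_abs]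
    nlinarith
  -- geometric summability
  have hgeo : Summable fun n : ℕ => r ^ n := summable_geometric_of_lt_one hr0.le hr1
  set b : ℕ → ℝ := fun n =>
    ((2 : ℝ) ^ s * (N : ℝ) ^ s) ^ 2 * (c n) ^ 2 + (4 * D * M ^ 2) * r ^ n with hbdef
  have hbsum : Summable b := (hS.mul_left _).add (hgeo.mul_left _)
  -- pointwise bound
  have hpt : ∀ n : ℕ, ((n : ℝ) ^ s * c n) ^ 2 ≤ b n := by
    intro n
    have hrn : 0 ≤ r ^ n := pow_nonneg hr0.le n
    have hM20 : 0 ≤ M ^ 2 := sq_nonneg M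
    rcases le_or_gt n (2 * N) with h | h
    · have h1 : ((n : ℝ)) ^ s ≤ (2 : ℝ) ^ s * (N : ℝ) ^ s := by
        have hcast : ((n : ℝ)) ≤ ((2 * N : ℕ) : ℝ) := Nat.cast_le.2 h
        calc ((n : ℝ)) ^ s ≤ (((2 * N : ℕ) : ℝ)) ^ s :=
              Real.rpow_le_rpow (Nat.cast_nonneg n) hcast hs
          _ = (2 : ℝ) ^ s * (N : ℝ) ^ s := by
              push_cast
              rw [Real.mul_rpow (by norm_num) (Nat.cast_nonneg N)]
      have h0 : 0 ≤ (n : ℝ) ^ s := Real.rpow_nonneg (Nat.cast_nonneg n) s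
      have : ((n : ℝ) ^ s * c n) ^ 2 ≤ ((2 : ℝ) ^ s * (N : ℝ) ^ s) ^ 2 * (c n) ^ 2 := by
        rw [mul_pow]
        have : ((n : ℝ) ^ s) ^ 2 ≤ ((2 : ℝ) ^ s * (N : ℝ) ^ s) ^ 2 := by nlinarith
        nlinarith [sq_nonneg (c n)]
      have h2 : 0 ≤ (4 * D * M ^ 2) * r ^ n := by positivity
      simp only [hbdef]; linarith
    · -- tail: n > 2N
      have hNn : N < n := by omega
      have hcb := htail n hNn
      set e : ℝ := (N : ℝ) + 1 - (n : ℝ) with hedef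
      have hXeq : ((2 : ℝ) ^ ((N : ℤ) + 1 - (n : ℤ)) : ℝ) = (2 : ℝ) ^ e := by
        rw [← Real.rpow_intCast 2 ((N : ℤ) + 1 - (n : ℤ))]
        push_cast
        rw [hedef]
      have hX0 : (0 : ℝ) ≤ (2 : ℝ) ^ e := (Real.rpow_pos_of_pos two_pos e).le
      have hcn2 : (c n) ^ 2 ≤ M ^ 2 * ((2 : ℝ) ^ e) ^ 2 := by
        have h1 : |c n| ≤ M * (2 : ℝ) ^ e := by rw [← hXeq]; exact hcb
        have h2 : |c n| ^ 2 ≤ (M * (2 : ℝ) ^ e) ^ 2 :=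
          pow_le_pow_left₀ (abs_nonneg _) h1 2
        rw [sq_abs] at h2
        nlinarith
      -- n^{2s} * 2^{2e} ≤ 4 D r^n
      have hrn_eq : r ^ n = (2 : ℝ) ^ ((-(3 : ℝ) / 4) * (n : ℝ)) := by
        rw [hrdef, ← Real.rpow_natCast ((2:ℝ) ^ (-(3:ℝ)/4)) n, ← Real.rpow_mul (by norm_num)]
      have hexp2 : ((2 : ℝ) ^ e) ^ 2 = (2 : ℝ) ^ (e + e) := by
        rw [sq, ← Real.rpow_add two_pos]
      have hkey : ((n : ℝ) ^ s) ^ 2 * ((2 : ℝ) ^ e) ^ 2 ≤ 4 * D * r ^ n := by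
        have h1 : ((n : ℝ) ^ s) ^ 2 * ((2 : ℝ) ^ e) ^ 2 ≤
            D * (2 : ℝ) ^ ((n : ℝ) / 4) * (2 : ℝ) ^ (e + e) := by
          rw [hexp2]
          have := hD n
          have h2 : (0:ℝ) < (2 : ℝ) ^ (e + e) := Real.rpow_pos_of_pos two_pos _
          nlinarith [sq_nonneg ((n:ℝ) ^ s)]
        have h2 : D * (2 : ℝ) ^ ((n : ℝ) / 4) * (2 : ℝ) ^ (e + e) =
            D * (2 : ℝ) ^ ((n : ℝ) / 4 + (e + e)) := by
          rw [mul_assoc, ← Real.rpow_add two_pos]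
        have h3 : (n : ℝ) / 4 + (e + e) ≤ 1 + (-(3 : ℝ) / 4) * (n : ℝ) := by
          have hcast : (2 * N + 1 : ℝ) ≤ (n : ℝ) := by exact_mod_cast Nat.cast_le.2 (by omega : 2 * N + 1 ≤ n)
          rw [hedef]; push_cast at hcast ⊢; linarith
        have h4 : (2 : ℝ) ^ ((n : ℝ) / 4 + (e + e)) ≤ (2 : ℝ) ^ (1 + (-(3 : ℝ) / 4) * (n : ℝ)) :=
          Real.rpow_le_rpow_of_exponent_le (by norm_num) h3
        have h5 : (2 : ℝ) ^ (1 + (-(3 : ℝ) / 4) * (n : ℝ)) = 2 * r ^ n := by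
          rw [Real.rpow_add two_pos, Real.rpow_one, hrn_eq]
        have hrn2 : 0 ≤ r ^ n := hrn
        calc ((n : ℝ) ^ s) ^ 2 * ((2 : ℝ) ^ e) ^ 2 ≤
              D * (2 : ℝ) ^ ((n : ℝ) / 4 + (e + e)) := by rw [← h2]; exact h1
          _ ≤ D * (2 : ℝ) ^ (1 + (-(3 : ℝ) / 4) * (n : ℝ)) := by nlinarith
          _ = D * (2 * r ^ n) := by rw [h5]
          _ ≤ 4 * D * r ^ n := by nlinarith
      have hfinal : ((n : ℝ) ^ s * c n) ^ 2 ≤ (4 * D * M ^ 2) * r ^ n := by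
        have h0 : 0 ≤ ((n : ℝ) ^ s) ^ 2 := sq_nonneg _
        calc ((n : ℝ) ^ s * c n) ^ 2 = ((n : ℝ) ^ s) ^ 2 * (c n) ^ 2 := by ring
          _ ≤ ((n : ℝ) ^ s) ^ 2 * (M ^ 2 * ((2 : ℝ) ^ e) ^ 2) :=
              mul_le_mul_of_nonneg_left hcn2 h0
          _ = M ^ 2 * (((n : ℝ) ^ s) ^ 2 * ((2 : ℝ) ^ e) ^ 2) := by ring
          _ ≤ M ^ 2 * (4 * D * r ^ n) := mul_le_mul_of_nonneg_left hkey hM20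
          _ = (4 * D * M ^ 2) * r ^ n := by ring
      have h2 : 0 ≤ ((2 : ℝ) ^ s * (N : ℝ) ^ s) ^ 2 * (c n) ^ 2 := by positivity
      simp only [hbdef]; linarith
  -- sum the bound
  have hTsum : (∑' n : ℕ, ((n : ℝ) ^ s * c n) ^ 2) ≤
      ((2 : ℝ) ^ s * (N : ℝ) ^ s) ^ 2 * S + (4 * D * M ^ 2) * (1 - r)⁻¹ := by
    have h1 : (∑' n : ℕ, ((n : ℝ) ^ s * c n) ^ 2) ≤ ∑' n, b n :=
      Summable.tsum_le_tsum hpt hT hbsum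
    have h2 : ∑' n, b n =
        ((2 : ℝ) ^ s * (N : ℝ) ^ s) ^ 2 * S + (4 * D * M ^ 2) * (1 - r)⁻¹ := by
      rw [hbdef, Summable.tsum_add (hS.mul_left _) (hgeo.mul_left _), tsum_mul_left, tsum_mul_left,
        tsum_geometric_of_lt_one hr0.le hr1]
    linarith
  clear_value r C0 S
  have hmain : (∑' n : ℕ, ((n : ℝ) ^ s * c n) ^ 2) ≤ C0 * ((N : ℝ) ^ s + K) ^ 2 * S := by
    have hK0 : (0 : ℝ) < K := lt_of_lt_of_le one_pos hK
    have h4D : 0 < 4 * D * (1 - r)⁻¹ := mul_pos (mul_pos (by norm_num) hD0) hinv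
    have e1 : ((2 : ℝ) ^ s * (N : ℝ) ^ s) ^ 2 * S + (4 * D * M ^ 2) * (1 - r)⁻¹ ≤
        C0 * (((N : ℝ) ^ s) ^ 2 + K ^ 2) * S := by
      have t1 : (4 * D * M ^ 2) * (1 - r)⁻¹ ≤ (4 * D * (1 - r)⁻¹) * (K ^ 2 * S) := by
        calc (4 * D * M ^ 2) * (1 - r)⁻¹ = (4 * D * (1 - r)⁻¹) * M ^ 2 := by ring
          _ ≤ (4 * D * (1 - r)⁻¹) * (K ^ 2 * S) := mul_le_mul_of_nonneg_left hM2 h4D.le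
      have hcle : ((2 : ℝ) ^ s) ^ 2 ≤ C0 := by rw [hC0def]; linarith
      have t2 : ((2 : ℝ) ^ s * (N : ℝ) ^ s) ^ 2 * S ≤
          C0 * (((N : ℝ) ^ s) ^ 2) * S := by
        calc ((2 : ℝ) ^ s * (N : ℝ) ^ s) ^ 2 * S
            = ((2 : ℝ) ^ s) ^ 2 * (((N : ℝ) ^ s) ^ 2 * S) := by ring
          _ ≤ C0 * (((N : ℝ) ^ s) ^ 2 * S) :=
              mul_le_mul_of_nonneg_right hcle (mul_nonneg (sq_nonneg _) hS0)
          _ = C0 * (((N : ℝ) ^ s) ^ 2) * S := by ring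
      have hcle2 : 4 * D * (1 - r)⁻¹ ≤ C0 := by
        rw [hC0def]; nlinarith [sq_nonneg ((2:ℝ)^s)]
      have t3 : (4 * D * (1 - r)⁻¹) * (K ^ 2 * S) ≤ C0 * K ^ 2 * S := by
        calc (4 * D * (1 - r)⁻¹) * (K ^ 2 * S)
            ≤ C0 * (K ^ 2 * S) :=
              mul_le_mul_of_nonneg_right hcle2 (mul_nonneg (sq_nonneg _) hS0)
          _ = C0 * K ^ 2 * S := by ring
      have hid : C0 * (((N : ℝ) ^ s) ^ 2 + K ^ 2) * S =
          C0 * (((N : ℝ) ^ s) ^ 2) * S + C0 * K ^ 2 * S := by ring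
      linarith
    have e2 : ((N : ℝ) ^ s) ^ 2 + K ^ 2 ≤ ((N : ℝ) ^ s + K) ^ 2 := by nlinarith
    have e3 : C0 * (((N : ℝ) ^ s) ^ 2 + K ^ 2) * S ≤ C0 * ((N : ℝ) ^ s + K) ^ 2 * S :=
      mul_le_mul_of_nonneg_right (mul_le_mul_of_nonneg_left e2 hC0.le) hS0
    linarith
  -- take square roots
  have hNK0 : 0 ≤ (N : ℝ) ^ s + K := by positivity
  calc Real.sqrt (∑' n : ℕ, ((n : ℝ) ^ s * c n) ^ 2)
      ≤ Real.sqrt (C0 * ((N : ℝ) ^ s + K) ^ 2 * S) := Real.sqrt_le_sqrt hmain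
    _ = Real.sqrt C0 * ((N : ℝ) ^ s + K) * Real.sqrt S := by
        rw [Real.sqrt_mul (mul_nonneg hC0.le (sq_nonneg _)), Real.sqrt_mul hC0.le,
          Real.sqrt_sq hNK0]
end

section
/- If ρ(x₁,x₂) = sin(kx₁) Σ_{n≥1} cₙ sin(nax₂) with rapidly decaying cₙ solves -a cos(ax₂)·R₁²Λ^βρ = λρ on 𝕋², then the coefficients satisfy the recursion λc₁ + c₂/p₂ = 0 and λcₙ + cₙ₊₁/pₙ₊₁ + cₙ₋₁/pₙ₋₁ = 0 for n ≥ 2, where pₙ = 2(k² + n²a²)^{1-β/2}/(ak²). -/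
open Real MeasureTheory intervalIntegral

lemma aux_int_cos (j : ℤ) : ∫ x in (0:ℝ)..(2*π), Real.cos (j * x) = if j = 0 then 2*π else 0 := by
  rcases eq_or_ne j 0 with h | h
  · simp [h]
  · rw [intervalIntegral.integral_comp_mul_left (fun x => Real.cos x) (by exact_mod_cast h)]
    simp only [integral_cos, mul_zero, Real.sin_zero, sub_zero, smul_eq_mul]
    rw [if_neg h, show (j:ℝ) * (2*π) = (2*j : ℤ) * π by push_cast; ring, Real.sin_int_mul_pi,
      mul_zero]

lemma aux_int_sin_sin (mm ll : ℤ) :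
    ∫ x in (0:ℝ)..(2*π), Real.sin (mm * x) * Real.sin (ll * x)
      = (if mm = ll then π else 0) - (if mm = -ll then π else 0) := by
  have hint : ∀ r : ℝ, IntervalIntegrable (fun x => Real.cos (r * x)) volume 0 (2*π) :=
    fun r => (Real.continuous_cos.comp (continuous_const.mul continuous_id)).intervalIntegrable _ _
  have hpt : ∀ x : ℝ, Real.sin (mm * x) * Real.sin (ll * x)
      = (Real.cos (((mm - ll : ℤ)) * x) - Real.cos (((mm + ll : ℤ)) * x)) / 2 := by
    intro x
    have h2 : Real.cos ((mm:ℝ)*x - ll*x) - Real.cos ((mm:ℝ)*x + ll*x)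
        = 2 * (Real.sin (mm*x) * Real.sin (ll*x)) := by
      rw [Real.cos_sub_cos,
        show ((mm:ℝ)*x - ll*x + ((mm:ℝ)*x + ll*x))/2 = (mm:ℝ)*x by ring,
        show ((mm:ℝ)*x - ll*x - ((mm:ℝ)*x + ll*x))/2 = -((ll:ℝ)*x) by ring, Real.sin_neg]
      ring
    push_cast
    rw [sub_mul, add_mul]
    linarith [h2]
  rw [intervalIntegral.integral_congr (fun x _ => hpt x)]
  rw [intervalIntegral.integral_div, intervalIntegral.integral_sub (hint _) (hint _)]
  rw [aux_int_cos, aux_int_cos]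
  split_ifs <;> first | ring1 | (exfalso; omega)

lemma aux_S (n N : ℕ) (hN : 1 ≤ N) :
    ∫ x in (0:ℝ)..(2*π), Real.sin ((n:ℝ) * x) * Real.sin ((N:ℝ) * x)
      = if n = N then π else 0 := by
  have h := aux_int_sin_sin (n:ℤ) (N:ℤ)
  push_cast at h
  rw [h]
  split_ifs <;> first | ring1 | (exfalso; omega)

lemma aux_T (n N : ℕ) (hN : 1 ≤ N) :
    ∫ x in (0:ℝ)..(2*π), Real.cos x * (Real.sin ((n:ℝ) * x) * Real.sin ((N:ℝ) * x))
      = (π/2) * ((if n + 1 = N ∧ 1 ≤ n then 1 else 0) + (if n = N + 1 then 1 else 0)) := by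
  have hint : ∀ r s : ℝ, IntervalIntegrable (fun x => Real.sin (r * x) * Real.sin (s * x))
      volume 0 (2*π) := fun r s =>
    ((Real.continuous_sin.comp (continuous_const.mul continuous_id)).mul
      (Real.continuous_sin.comp (continuous_const.mul continuous_id))).intervalIntegrable _ _
  have hpt : ∀ x : ℝ, Real.cos x * (Real.sin ((n:ℝ) * x) * Real.sin ((N:ℝ) * x))
      = (Real.sin (((n:ℤ)+1 : ℤ) * x) * Real.sin ((N:ℝ) * x)
          + Real.sin (((n:ℤ)-1 : ℤ) * x) * Real.sin ((N:ℝ) * x)) / 2 := by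
    intro x
    push_cast
    rw [show ((n:ℝ)+1)*x = (n:ℝ)*x + x by ring, show ((n:ℝ)-1)*x = (n:ℝ)*x - x by ring,
      Real.sin_add, Real.sin_sub]
    ring
  rw [intervalIntegral.integral_congr (fun x _ => hpt x)]
  rw [intervalIntegral.integral_div, intervalIntegral.integral_add (by
      have := hint ((n:ℝ)+1) (N:ℝ); push_cast; exact this) (by
      have := hint ((n:ℝ)-1) (N:ℝ); push_cast; exact this)]
  have h1 := aux_int_sin_sin ((n:ℤ)+1) (N:ℤ)
  have h2 := aux_int_sin_sin ((n:ℤ)-1) (N:ℤ)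
  push_cast at h1 h2 ⊢
  rw [h1, h2]
  split_ifs <;> first | ring1 | (exfalso; omega)

/-- If `ρ(x₁,x₂) = sin(kx₁) Σ_{n≥1} cₙ sin(nax₂)`, with rapidly decaying `cₙ`, solves the
eigenvalue problem `-a cos(ax₂)·R₁²Λ^βρ = λρ` on `𝕋²` (where `R₁²Λ^β` acts on the mode
`(k, na)` by multiplication with `m(n) = k²(k² + n²a²)^{(β-2)/2}`), then the coefficients
satisfy the recursion `λc₁ + c₂/p₂ = 0` and `λcₙ + cₙ₊₁/pₙ₊₁ + cₙ₋₁/pₙ₋₁ = 0` for `n ≥ 2`,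
where `pₙ = 2(k² + n²a²)^{1-β/2}/(ak²)`. -/
theorem stmt11 (a k : ℕ) (ha : 1 ≤ a) (hk : 1 ≤ k) (β : ℝ) (hβ0 : 0 < β) (hβ2 : β < 2)
    (lam : ℝ) (c : ℕ → ℝ) (hc0 : c 0 = 0)
    (hdecay : ∀ j : ℕ, ∃ C : ℝ, ∀ n : ℕ, |c n| * (n : ℝ) ^ j ≤ C)
    (m : ℕ → ℝ)
    (hm : m = fun n : ℕ => (k : ℝ) ^ 2 * ((k : ℝ) ^ 2 + (n : ℝ) ^ 2 * (a : ℝ) ^ 2) ^ ((β - 2) / 2))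
    (p : ℕ → ℝ)
    (hp : p = fun n : ℕ =>
      2 * ((k : ℝ) ^ 2 + (n : ℝ) ^ 2 * (a : ℝ) ^ 2) ^ (1 - β / 2) / ((a : ℝ) * (k : ℝ) ^ 2))
    (heq : ∀ x₁ x₂ : ℝ,
      -(a : ℝ) * Real.cos ((a : ℝ) * x₂) *
          ∑' n : ℕ, m n * c n * Real.sin ((k : ℝ) * x₁) * Real.sin ((n : ℝ) * (a : ℝ) * x₂)
        = lam * ∑' n : ℕ, c n * Real.sin ((k : ℝ) * x₁) * Real.sin ((n : ℝ) * (a : ℝ) * x₂)) :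
    lam * c 1 + c 2 / p 2 = 0 ∧
    ∀ n : ℕ, 2 ≤ n → lam * c n + c (n + 1) / p (n + 1) + c (n - 1) / p (n - 1) = 0 := by
  have hk0 : (0:ℝ) < (k:ℝ) := by exact_mod_cast hk
  have ha0 : (0:ℝ) < (a:ℝ) := by exact_mod_cast ha
  -- Reduced 1-variable equation
  have h1 : ∀ y : ℝ, -(a:ℝ) * Real.cos y * ∑' n : ℕ, m n * c n * Real.sin ((n:ℝ)*y)
      = lam * ∑' n : ℕ, c n * Real.sin ((n:ℝ)*y) := by
    intro y
    have h := heq (π/(2*k)) (y/a)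
    have hs : Real.sin ((k:ℝ) * (π/(2*k))) = 1 := by
      rw [show (k:ℝ) * (π/(2*k)) = π/2 by field_simp]
      exact Real.sin_pi_div_two
    have hca : (a:ℝ) * (y/a) = y := by field_simp
    have harg : ∀ n : ℕ, (n:ℝ) * a * (y/a) = (n:ℝ)*y := by intro n; field_simp
    rw [hca] at h
    have e1 : (∑' n : ℕ, m n * c n * Real.sin ((k:ℝ)*(π/(2*k))) * Real.sin ((n:ℝ)*a*(y/a)))
        = ∑' n : ℕ, m n * c n * Real.sin ((n:ℝ)*y) :=
      tsum_congr fun n => by rw [hs, harg n, mul_one]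
    have e2 : (∑' n : ℕ, c n * Real.sin ((k:ℝ)*(π/(2*k))) * Real.sin ((n:ℝ)*a*(y/a)))
        = ∑' n : ℕ, c n * Real.sin ((n:ℝ)*y) :=
      tsum_congr fun n => by rw [hs, harg n, mul_one]
    rw [e1, e2] at h
    exact h
  -- summability of |c|
  obtain ⟨C, hC⟩ := hdecay 2
  have hCsum : Summable (fun n : ℕ => |c n|) := by
    have hb : ∀ n : ℕ, |c n| ≤ C * ((1:ℝ)/(n:ℝ)^2) := by
      intro n
      rcases Nat.eq_zero_or_pos n with h | h
      · subst h; simp [hc0]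
      · have hn : (0:ℝ) < (n:ℝ)^2 := by positivity
        rw [show C * ((1:ℝ)/(n:ℝ)^2) = C / (n:ℝ)^2 by ring, le_div_iff₀ hn]
        exact hC n
    exact Summable.of_nonneg_of_le (fun n => abs_nonneg _) hb
      ((summable_one_div_nat_pow.mpr (by norm_num)).mul_left C)
  -- bound on m
  have hm_bd : ∀ n : ℕ, |m n| ≤ (k:ℝ)^2 := by
    intro n
    simp only [hm]
    have hX : (1:ℝ) ≤ (k:ℝ)^2 + (n:ℝ)^2*(a:ℝ)^2 := by
      have h1 : (1:ℝ) ≤ (k:ℝ) := by exact_mod_cast hk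
      nlinarith [sq_nonneg ((n:ℝ)*(a:ℝ))]
    have hXpos : (0:ℝ) < (k:ℝ)^2 + (n:ℝ)^2*(a:ℝ)^2 := by positivity
    rw [abs_of_nonneg (mul_nonneg (by positivity)
      (Real.rpow_nonneg hXpos.le _))]
    have hle : ((k:ℝ)^2 + (n:ℝ)^2*(a:ℝ)^2) ^ ((β-2)/2) ≤ 1 :=
      Real.rpow_le_one_of_one_le_of_nonpos hX (by linarith)
    calc (k:ℝ)^2 * ((k:ℝ)^2 + (n:ℝ)^2*(a:ℝ)^2) ^ ((β-2)/2) ≤ (k:ℝ)^2 * 1 :=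
          mul_le_mul_of_nonneg_left hle (by positivity)
      _ = (k:ℝ)^2 := mul_one _
  -- key recursion via integration against sin (N y)
  have hle2π : (0:ℝ) ≤ 2*π := by positivity
  have key : ∀ N : ℕ, 1 ≤ N → lam * c N * π
      + ((a:ℝ) * (m (N+1) * c (N+1))) * (π/2)
      + (if 2 ≤ N then ((a:ℝ) * (m (N-1) * c (N-1))) * (π/2) else 0) = 0 := by
    intro N hN
    set μ : Measure ℝ := volume.restrict (Set.Ioc (0:ℝ) (2*π)) with hμ
    have hμuniv : (μ Set.univ).toReal = 2*π := by
      rw [hμ, Measure.restrict_apply_univ, Real.volume_Ioc]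
      rw [ENNReal.toReal_ofReal (by linarith [Real.pi_pos] : (0:ℝ) ≤ 2*π - 0)]
      ring
    -- left side
    set F : ℕ → ℝ → ℝ := fun n y =>
      (-(a:ℝ) * (m n * c n)) * (Real.cos y * (Real.sin ((n:ℝ)*y) * Real.sin ((N:ℝ)*y))) with hF
    have hFcont : ∀ n, Continuous (F n) := by
      intro n
      apply continuous_const.mul
      exact Real.continuous_cos.mul
        ((Real.continuous_sin.comp (continuous_const.mul continuous_id)).mul
          (Real.continuous_sin.comp (continuous_const.mul continuous_id)))
    have hFint : ∀ n, Integrable (F n) μ := fun n => (hFcont n).integrableOn_Ioc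
    have hFbd : ∀ n y, ‖F n y‖ ≤ (a:ℝ) * (k:ℝ)^2 * |c n| := by
      intro n y
      rw [hF]
      simp only [Real.norm_eq_abs, abs_mul]
      have e1 : |(-(a:ℝ))| = (a:ℝ) := by rw [abs_neg, abs_of_nonneg ha0.le]
      have b1 : |Real.cos y| ≤ 1 := Real.abs_cos_le_one y
      have b2 : |Real.sin ((n:ℝ)*y)| ≤ 1 := Real.abs_sin_le_one _
      have b3 : |Real.sin ((N:ℝ)*y)| ≤ 1 := Real.abs_sin_le_one _
      have hmn := hm_bd n
      have h0 : (0:ℝ) ≤ |c n| := abs_nonneg _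
      have h0' : (0:ℝ) ≤ |m n| := abs_nonneg _
      rw [e1]
      have h23 : |Real.sin ((n:ℝ)*y)| * |Real.sin ((N:ℝ)*y)| ≤ 1 :=
        mul_le_one₀ b2 (abs_nonneg _) b3
      have ht : |Real.cos y| * (|Real.sin ((n:ℝ)*y)| * |Real.sin ((N:ℝ)*y)|) ≤ 1 :=
        mul_le_one₀ b1 (mul_nonneg (abs_nonneg _) (abs_nonneg _)) h23
      calc (a:ℝ) * (|m n| * |c n|) * (|Real.cos y| * (|Real.sin ((n:ℝ)*y)| * |Real.sin ((N:ℝ)*y)|))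
          ≤ (a:ℝ) * (|m n| * |c n|) * 1 :=
            mul_le_mul_of_nonneg_left ht (by positivity)
        _ = (a:ℝ) * (|m n| * |c n|) := mul_one _
        _ ≤ (a:ℝ) * ((k:ℝ)^2 * |c n|) :=
            mul_le_mul_of_nonneg_left (mul_le_mul_of_nonneg_right hmn h0) ha0.le
        _ = (a:ℝ) * (k:ℝ)^2 * |c n| := by ring
    have hFnorm : Summable (fun n => ∫ y, ‖F n y‖ ∂μ) := by
      apply Summable.of_nonneg_of_le (fun n => integral_nonneg (fun y => norm_nonneg _))
        (fun n => ?_) ((hCsum.mul_left ((a:ℝ) * (k:ℝ)^2 * (2*π))))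
      have : ∫ y, ‖F n y‖ ∂μ ≤ ∫ _y, ((a:ℝ) * (k:ℝ)^2 * |c n|) ∂μ := by
        apply integral_mono (hFint n).norm _ (fun y => hFbd n y)
        exact integrableOn_const (by rw [Real.volume_Ioc]; exact ENNReal.ofReal_ne_top)
      rw [MeasureTheory.integral_const, measureReal_def, hμuniv, smul_eq_mul] at this
      calc ∫ y, ‖F n y‖ ∂μ ≤ 2*π * ((a:ℝ) * (k:ℝ)^2 * |c n|) := this
        _ = (a:ℝ) * (k:ℝ)^2 * (2*π) * |c n| := by ring
    -- right side
    set G : ℕ → ℝ → ℝ := fun n y =>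
      (lam * c n) * (Real.sin ((n:ℝ)*y) * Real.sin ((N:ℝ)*y)) with hG
    have hGcont : ∀ n, Continuous (G n) := by
      intro n
      apply continuous_const.mul
      exact (Real.continuous_sin.comp (continuous_const.mul continuous_id)).mul
        (Real.continuous_sin.comp (continuous_const.mul continuous_id))
    have hGint : ∀ n, Integrable (G n) μ := fun n => (hGcont n).integrableOn_Ioc
    have hGbd : ∀ n y, ‖G n y‖ ≤ |lam| * |c n| := by
      intro n y
      rw [hG]
      simp only [Real.norm_eq_abs, abs_mul]
      have b2 : |Real.sin ((n:ℝ)*y)| ≤ 1 := Real.abs_sin_le_one _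
      have b3 : |Real.sin ((N:ℝ)*y)| ≤ 1 := Real.abs_sin_le_one _
      have h0 : (0:ℝ) ≤ |c n| := abs_nonneg _
      have h0' : (0:ℝ) ≤ |lam| := abs_nonneg _
      have h23 : |Real.sin ((n:ℝ)*y)| * |Real.sin ((N:ℝ)*y)| ≤ 1 :=
        mul_le_one₀ b2 (abs_nonneg _) b3
      calc |lam| * |c n| * (|Real.sin ((n:ℝ)*y)| * |Real.sin ((N:ℝ)*y)|)
          ≤ |lam| * |c n| * 1 :=
            mul_le_mul_of_nonneg_left h23 (by positivity)
        _ = |lam| * |c n| := mul_one _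
    have hGnorm : Summable (fun n => ∫ y, ‖G n y‖ ∂μ) := by
      apply Summable.of_nonneg_of_le (fun n => integral_nonneg (fun y => norm_nonneg _))
        (fun n => ?_) ((hCsum.mul_left (|lam| * (2*π))))
      have : ∫ y, ‖G n y‖ ∂μ ≤ ∫ _y, (|lam| * |c n|) ∂μ := by
        apply integral_mono (hGint n).norm _ (fun y => hGbd n y)
        exact integrableOn_const (by rw [Real.volume_Ioc]; exact ENNReal.ofReal_ne_top)
      rw [MeasureTheory.integral_const, measureReal_def, hμuniv, smul_eq_mul] at this
      calc ∫ y, ‖G n y‖ ∂μ ≤ 2*π * (|lam| * |c n|) := this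
        _ = |lam| * (2*π) * |c n| := by ring
    -- the integrated identity
    have hIeq : ∫ y, (∑' n, F n y) ∂μ = ∫ y, (∑' n, G n y) ∂μ := by
      apply MeasureTheory.integral_congr_ae
      apply Filter.Eventually.of_forall
      intro y
      show (∑' n, F n y) = ∑' n, G n y
      have eF : (∑' n, F n y)
          = (-(a:ℝ) * Real.cos y * ∑' n : ℕ, m n * c n * Real.sin ((n:ℝ)*y)) * Real.sin ((N:ℝ)*y) := by
        rw [show (-(a:ℝ) * Real.cos y * ∑' n : ℕ, m n * c n * Real.sin ((n:ℝ)*y)) * Real.sin ((N:ℝ)*y)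
            = (-(a:ℝ) * Real.cos y * Real.sin ((N:ℝ)*y)) * ∑' n : ℕ, m n * c n * Real.sin ((n:ℝ)*y) by ring,
          ← tsum_mul_left]
        exact tsum_congr fun n => by rw [hF]; ring
      have eG : (∑' n, G n y)
          = (lam * ∑' n : ℕ, c n * Real.sin ((n:ℝ)*y)) * Real.sin ((N:ℝ)*y) := by
        rw [show (lam * ∑' n : ℕ, c n * Real.sin ((n:ℝ)*y)) * Real.sin ((N:ℝ)*y)
            = (lam * Real.sin ((N:ℝ)*y)) * ∑' n : ℕ, c n * Real.sin ((n:ℝ)*y) by ring,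
          ← tsum_mul_left]
        exact tsum_congr fun n => by rw [hG]; ring
      rw [eF, eG, h1 y]
    rw [← integral_tsum_of_summable_integral_norm hFint hFnorm,
      ← integral_tsum_of_summable_integral_norm hGint hGnorm] at hIeq
    -- compute each side
    have hFi : ∀ n, ∫ y, F n y ∂μ
        = (-(a:ℝ) * (m n * c n)) *
            ((π/2) * ((if n + 1 = N ∧ 1 ≤ n then 1 else 0) + (if n = N + 1 then 1 else 0))) := by
      intro n
      rw [hF]
      rw [MeasureTheory.integral_const_mul]
      congr 1
      rw [hμ, ← intervalIntegral.integral_of_le hle2π]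
      exact aux_T n N hN
    have hGi : ∀ n, ∫ y, G n y ∂μ = (lam * c n) * (if n = N then π else 0) := by
      intro n
      rw [hG, MeasureTheory.integral_const_mul]
      congr 1
      rw [hμ, ← intervalIntegral.integral_of_le hle2π]
      exact aux_S n N hN
    simp only [hFi, hGi] at hIeq
    -- evaluate the two tsums
    set W1 : ℝ := if 2 ≤ N then (-(a:ℝ) * (m (N-1) * c (N-1))) * (π/2) else 0 with hW1
    set W2 : ℝ := (-(a:ℝ) * (m (N+1) * c (N+1))) * (π/2) with hW2
    have hsplit : ∀ n : ℕ, (-(a:ℝ) * (m n * c n)) *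
            ((π/2) * ((if n + 1 = N ∧ 1 ≤ n then 1 else 0) + (if n = N + 1 then 1 else 0)))
        = (if n = N-1 then W1 else 0) + (if n = N+1 then W2 else 0) := by
      intro n
      by_cases h1' : n = N + 1
      · subst h1'
        rw [if_neg (by omega), if_pos rfl, if_neg (by omega), if_pos rfl, hW2]
        ring
      · by_cases h2' : n = N - 1
        · subst h2'
          by_cases h3' : 2 ≤ N
          · rw [if_pos (by omega), if_neg (by omega), if_pos rfl, if_neg h1', hW1, if_pos h3']
            ring
          · rw [if_neg (by omega), if_neg h1', if_pos rfl, if_neg h1', hW1, if_neg h3']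
            ring
        · rw [if_neg (by omega), if_neg h1', if_neg h2', if_neg h1']
          ring
    have hsum1 : Summable (fun n : ℕ => if n = N-1 then W1 else 0) :=
      (hasSum_ite_eq (N-1) W1).summable
    have hsum2 : Summable (fun n : ℕ => if n = N+1 then W2 else 0) :=
      (hasSum_ite_eq (N+1) W2).summable
    have hL : (∑' n : ℕ, (-(a:ℝ) * (m n * c n)) *
            ((π/2) * ((if n + 1 = N ∧ 1 ≤ n then 1 else 0) + (if n = N + 1 then 1 else 0))))
        = W1 + W2 := by
      rw [tsum_congr hsplit, hsum1.tsum_add hsum2, tsum_ite_eq, tsum_ite_eq]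
    have hR : (∑' n : ℕ, (lam * c n) * (if n = N then π else 0)) = lam * c N * π := by
      have : ∀ n : ℕ, (lam * c n) * (if n = N then π else 0)
          = if n = N then lam * c N * π else 0 := by
        intro n
        by_cases h : n = N
        · subst h; rw [if_pos rfl, if_pos rfl]
        · rw [if_neg h, if_neg h, mul_zero]
      rw [tsum_congr this, tsum_ite_eq]
    rw [hL, hR] at hIeq
    rw [hW1, hW2] at hIeq
    by_cases hcase : 2 ≤ N
    · rw [if_pos hcase] at hIeq ⊢
      linear_combination -hIeq
    · rw [if_neg hcase] at hIeq ⊢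
      linear_combination -hIeq
  -- conversion between p and m
  have hconv : ∀ j : ℕ, c j / p j = ((a:ℝ)/2) * (m j * c j) := by
    intro j
    simp only [hp, hm]
    have hXpos : (0:ℝ) < (k:ℝ)^2 + (j:ℝ)^2*(a:ℝ)^2 := by positivity
    have hrw : ((k:ℝ)^2 + (j:ℝ)^2*(a:ℝ)^2) ^ ((β-2)/2)
        = (((k:ℝ)^2 + (j:ℝ)^2*(a:ℝ)^2) ^ (1-β/2))⁻¹ := by
      rw [show (β-2)/2 = -(1-β/2) by ring, Real.rpow_neg hXpos.le]
    rw [hrw]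
    have h1' : ((k:ℝ)^2 + (j:ℝ)^2*(a:ℝ)^2) ^ (1-β/2) ≠ 0 :=
      ne_of_gt (Real.rpow_pos_of_pos hXpos _)
    field_simp
  have hπ0 : π ≠ 0 := Real.pi_ne_zero
  constructor
  · have h := key 1 (le_refl 1)
    rw [if_neg (by omega)] at h
    rw [hconv 2]
    have h2 : (lam * c 1 + (a:ℝ)/2 * (m 2 * c 2)) * π = 0 := by
      have e : (1:ℕ) + 1 = 2 := rfl
      rw [e] at h
      linear_combination h
    rcases mul_eq_zero.mp h2 with h3 | h3
    · exact h3
    · exact absurd h3 hπ0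
  · intro n hn
    have h := key n (by omega)
    rw [if_pos hn] at h
    rw [hconv (n+1), hconv (n-1)]
    have h2 : (lam * c n + (a:ℝ)/2 * (m (n+1) * c (n+1)) + (a:ℝ)/2 * (m (n-1) * c (n-1))) * π = 0 := by
      linear_combination h
    rcases mul_eq_zero.mp h2 with h3 | h3
    · exact h3
    · exact absurd h3 hπ0
end

section
/- Let ρ ∈ L^∞(0,T;L²(𝕋²)) solve ∂ₜρ = -a cos(ax₂) R₁²Λ^βρ with 0 < β ≤ 2 and ρ(·,0) = 0. Then ρ(·,t) = 0 for all t ∈ (0,T). -/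
/-- Let `ρ ∈ L^∞(0,T;L²(𝕋²))` solve `∂ₜρ = -a cos(ax₂) R₁²Λ^βρ` with `0 < β ≤ 2` and
`ρ(·,0) = 0`.  Then `ρ(·,t) = 0` for all `t ∈ (0,T)`.  In Fourier variables, with
`m(k) = k₁²|k|^{β-2}` (and `m(0)=0`), the equation reads
`∂ₜρ̂(k₁,k₂) = -(a/2)[m(k₁,k₂-a)ρ̂(k₁,k₂-a) + m(k₁,k₂+a)ρ̂(k₁,k₂+a)]`, and the
`L^∞(0,T;L²)` assumption is a uniform bound on `Σ_k |ρ̂(k,t)|²`. -/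
theorem stmt12 (a : ℤ) (β T B : ℝ) (hβ0 : 0 < β) (hβ2 : β ≤ 2) (hT : 0 < T)
    (m : ℤ × ℤ → ℝ)
    (hm : m = fun kk =>
      if kk = 0 then 0
      else ((kk.1 : ℝ)) ^ 2 * (((kk.1 : ℝ)) ^ 2 + ((kk.2 : ℝ)) ^ 2) ^ ((β - 2) / 2))
    (ρhat : ℝ → ℤ × ℤ → ℂ)
    (hode : ∀ t ∈ Set.Ioo (0 : ℝ) T, ∀ kk : ℤ × ℤ,
      HasDerivAt (fun s => ρhat s kk)
        (-((a : ℂ) / 2) * ((m (kk.1, kk.2 - a) : ℂ) * ρhat t (kk.1, kk.2 - a)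
          + (m (kk.1, kk.2 + a) : ℂ) * ρhat t (kk.1, kk.2 + a))) t)
    (hsum : ∀ t ∈ Set.Icc (0 : ℝ) T, Summable (fun kk : ℤ × ℤ => ‖ρhat t kk‖ ^ 2))
    (hbdd : ∀ t ∈ Set.Icc (0 : ℝ) T, ∑' kk : ℤ × ℤ, ‖ρhat t kk‖ ^ 2 ≤ B)
    (hcont : ∀ kk : ℤ × ℤ, ContinuousOn (fun t => ρhat t kk) (Set.Icc 0 T))
    (hinit : ∀ kk : ℤ × ℤ, ρhat 0 kk = 0) :
    ∀ t ∈ Set.Ioo (0 : ℝ) T, ∀ kk : ℤ × ℤ, ρhat t kk = 0 := by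
  classical
  -- m is nonnegative and bounded by k₁²
  have hm0 : ∀ kk : ℤ × ℤ, 0 ≤ m kk ∧ m kk ≤ (kk.1 : ℝ) ^ 2 := by
    intro kk
    rw [hm]
    dsimp only
    split_ifs with h
    · exact ⟨le_rfl, sq_nonneg _⟩
    · have hge : (1 : ℝ) ≤ (kk.1 : ℝ) ^ 2 + (kk.2 : ℝ) ^ 2 := by
        have h' : kk.1 ≠ 0 ∨ kk.2 ≠ 0 := by
          by_contra hc
          push_neg at hc
          exact h (Prod.ext hc.1 hc.2)
        rcases h' with h' | h'
        · have : (1 : ℝ) ≤ |(kk.1 : ℝ)| := by exact_mod_cast Int.one_le_abs h'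
          nlinarith [sq_abs ((kk.1 : ℝ)), sq_nonneg ((kk.2 : ℝ))]
        · have : (1 : ℝ) ≤ |(kk.2 : ℝ)| := by exact_mod_cast Int.one_le_abs h'
          nlinarith [sq_abs ((kk.2 : ℝ)), sq_nonneg ((kk.1 : ℝ))]
      have hpos : (0 : ℝ) ≤ (kk.1 : ℝ) ^ 2 + (kk.2 : ℝ) ^ 2 := by positivity
      constructor
      · have := Real.rpow_nonneg hpos ((β - 2) / 2)
        positivity
      · have h1 : ((kk.1 : ℝ) ^ 2 + (kk.2 : ℝ) ^ 2) ^ ((β - 2) / 2) ≤ 1 :=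
          Real.rpow_le_one_of_one_le_of_nonpos hge (by linarith)
        nlinarith [sq_nonneg ((kk.1 : ℝ)),
          Real.rpow_nonneg hpos ((β - 2) / 2)]
  set SB := Real.sqrt B with hSB
  have hbase : ∀ t ∈ Set.Icc (0 : ℝ) T, ∀ kk : ℤ × ℤ, ‖ρhat t kk‖ ≤ SB := by
    intro t ht kk
    have h1 : ‖ρhat t kk‖ ^ 2 ≤ ∑' kk : ℤ × ℤ, ‖ρhat t kk‖ ^ 2 :=
      Summable.le_tsum (hsum t ht) kk fun _ _ => by positivity
    have h2 : ‖ρhat t kk‖ ^ 2 ≤ B := h1.trans (hbdd t ht)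
    calc ‖ρhat t kk‖ = Real.sqrt (‖ρhat t kk‖ ^ 2) := by
          rw [Real.sqrt_sq (norm_nonneg _)]
      _ ≤ SB := Real.sqrt_le_sqrt h2
  have key : ∀ (k1 : ℤ) (n : ℕ), ∀ t ∈ Set.Icc (0 : ℝ) T, ∀ k2 : ℤ,
      ‖ρhat t (k1, k2)‖ ≤ SB * (|(a : ℝ)| * (k1 : ℝ) ^ 2) ^ n * t ^ n / (n.factorial : ℝ) := by
    intro k1 n
    induction n with
    | zero =>
      intro t ht k2
      simpa using hbase t ht (k1, k2)
    | succ n ih =>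
      intro t ht k2
      set M : ℝ := |(a : ℝ)| * (k1 : ℝ) ^ 2 with hMdef
      have hM0 : 0 ≤ M := by positivity
      have hSB0 : 0 ≤ SB := Real.sqrt_nonneg _
      set D : ℝ → ℂ := fun s => -((a : ℂ) / 2) * ((m (k1, k2 - a) : ℂ) * ρhat s (k1, k2 - a)
          + (m (k1, k2 + a) : ℂ) * ρhat s (k1, k2 + a)) with hD
      have hsub : Set.Icc (0 : ℝ) t ⊆ Set.Icc 0 T := Set.Icc_subset_Icc le_rfl ht.2
      have hDcont : ContinuousOn D (Set.Icc 0 t) := by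
        apply ContinuousOn.mul continuousOn_const
        exact (((continuousOn_const.mul ((hcont _).mono hsub))).add
          ((continuousOn_const.mul ((hcont _).mono hsub))))
      have hint : IntervalIntegrable D MeasureTheory.volume 0 t := by
        apply ContinuousOn.intervalIntegrable
        rwa [Set.uIcc_of_le ht.1]
      have hftc : ∫ s in (0 : ℝ)..t, D s = ρhat t (k1, k2) - ρhat 0 (k1, k2) := by
        apply intervalIntegral.integral_eq_sub_of_hasDerivAt_of_le ht.1
          ((hcont (k1, k2)).mono hsub) ?_ hint
        intro x hx
        exact hode x ⟨hx.1, lt_of_lt_of_le hx.2 ht.2⟩ (k1, k2)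
      have hval : ρhat t (k1, k2) = ∫ s in (0 : ℝ)..t, D s := by
        rw [hftc, hinit, sub_zero]
      have hnormD : ∀ s ∈ Set.Icc (0 : ℝ) t,
          ‖D s‖ ≤ SB * M ^ (n + 1) / (n.factorial : ℝ) * s ^ n := by
        intro s hs
        have hs' : s ∈ Set.Icc (0 : ℝ) T := hsub hs
        have h1 := ih s hs' (k2 - a)
        have h2 := ih s hs' (k2 + a)
        have hm1 := hm0 (k1, k2 - a)
        have hm2 := hm0 (k1, k2 + a)
        dsimp only at hm1 hm2
        have hn1 : 0 ≤ ‖ρhat s (k1, k2 - a)‖ := norm_nonneg _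
        have hn2 : 0 ≤ ‖ρhat s (k1, k2 + a)‖ := norm_nonneg _
        have ha : ‖-((a : ℂ) / 2)‖ = |(a : ℝ)| / 2 := by
          rw [norm_neg, norm_div]
          simp
        have e1 : ‖D s‖ ≤ (|(a : ℝ)| / 2) *
            (m (k1, k2 - a) * ‖ρhat s (k1, k2 - a)‖
              + m (k1, k2 + a) * ‖ρhat s (k1, k2 + a)‖) := by
          rw [hD]
          dsimp only
          rw [norm_mul, ha]
          gcongr
          calc ‖(m (k1, k2 - a) : ℂ) * ρhat s (k1, k2 - a)
                + (m (k1, k2 + a) : ℂ) * ρhat s (k1, k2 + a)‖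
              ≤ ‖(m (k1, k2 - a) : ℂ) * ρhat s (k1, k2 - a)‖
                + ‖(m (k1, k2 + a) : ℂ) * ρhat s (k1, k2 + a)‖ := norm_add_le _ _
            _ = m (k1, k2 - a) * ‖ρhat s (k1, k2 - a)‖
                + m (k1, k2 + a) * ‖ρhat s (k1, k2 + a)‖ := by
                rw [norm_mul, norm_mul, Complex.norm_real, Complex.norm_real,
                  Real.norm_of_nonneg hm1.1, Real.norm_of_nonneg hm2.1]
        have hXnn : 0 ≤ SB * M ^ n * s ^ n / (n.factorial : ℝ) := by
          have : (0:ℝ) ≤ s ^ n := pow_nonneg hs.1 n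
          positivity
        have e2 : m (k1, k2 - a) * ‖ρhat s (k1, k2 - a)‖
              + m (k1, k2 + a) * ‖ρhat s (k1, k2 + a)‖
            ≤ (k1 : ℝ) ^ 2 * (SB * M ^ n * s ^ n / (n.factorial : ℝ))
              + (k1 : ℝ) ^ 2 * (SB * M ^ n * s ^ n / (n.factorial : ℝ)) :=
          add_le_add (mul_le_mul hm1.2 h1 hn1 (sq_nonneg _))
            (mul_le_mul hm2.2 h2 hn2 (sq_nonneg _))
        calc ‖D s‖ ≤ (|(a : ℝ)| / 2) *
              ((k1 : ℝ) ^ 2 * (SB * M ^ n * s ^ n / (n.factorial : ℝ))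
                + (k1 : ℝ) ^ 2 * (SB * M ^ n * s ^ n / (n.factorial : ℝ))) := by
              refine e1.trans ?_
              have hha : (0:ℝ) ≤ |(a : ℝ)| / 2 := by positivity
              exact mul_le_mul_of_nonneg_left e2 hha
          _ = SB * M ^ (n + 1) / (n.factorial : ℝ) * s ^ n := by
              rw [hMdef]; ring
      have hintnorm : IntervalIntegrable (fun s => ‖D s‖) MeasureTheory.volume 0 t :=
        hint.norm
      have hintbound : IntervalIntegrable
          (fun s => SB * M ^ (n + 1) / (n.factorial : ℝ) * s ^ n) MeasureTheory.volume 0 t :=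
        ((continuous_const.mul (continuous_pow n)).intervalIntegrable 0 t)
      have hcalc : ‖ρhat t (k1, k2)‖ ≤ SB * M ^ (n + 1) / (n.factorial : ℝ) * (t ^ (n + 1) / (n + 1)) := by
        rw [hval]
        calc ‖∫ s in (0 : ℝ)..t, D s‖ ≤ ∫ s in (0 : ℝ)..t, ‖D s‖ :=
            intervalIntegral.norm_integral_le_integral_norm ht.1
          _ ≤ ∫ s in (0 : ℝ)..t, SB * M ^ (n + 1) / (n.factorial : ℝ) * s ^ n := by
              apply intervalIntegral.integral_mono_on ht.1 hintnorm hintbound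
              exact hnormD
          _ = SB * M ^ (n + 1) / (n.factorial : ℝ) * (t ^ (n + 1) / (n + 1)) := by
              rw [intervalIntegral.integral_const_mul, integral_pow]
              norm_num
      refine hcalc.trans (le_of_eq ?_)
      have hfs : (((n + 1).factorial : ℕ) : ℝ) = ((n : ℝ) + 1) * (n.factorial : ℝ) := by
        rw [Nat.factorial_succ]; push_cast; ring
      rw [hfs, div_mul_div_comm, mul_comm ((n.factorial : ℝ)) ((n : ℝ) + 1)]
  intro t ht kk
  obtain ⟨k1, k2⟩ := kk
  have hle : ∀ n : ℕ, ‖ρhat t (k1, k2)‖ ≤ SB * ((|(a : ℝ)| * (k1 : ℝ) ^ 2) * t) ^ n / (n.factorial : ℝ) := by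
    intro n
    have h := key k1 n t ⟨ht.1.le, ht.2.le⟩ k2
    calc ‖ρhat t (k1, k2)‖ ≤ SB * (|(a : ℝ)| * (k1 : ℝ) ^ 2) ^ n * t ^ n / (n.factorial : ℝ) := h
      _ = SB * ((|(a : ℝ)| * (k1 : ℝ) ^ 2) * t) ^ n / (n.factorial : ℝ) := by rw [mul_pow]; ring
  have h0 : Filter.Tendsto (fun n : ℕ => SB * ((|(a : ℝ)| * (k1 : ℝ) ^ 2) * t) ^ n / (n.factorial : ℝ))
      Filter.atTop (nhds 0) := by
    have h1 := FloorSemiring.tendsto_pow_div_factorial_atTop ((|(a : ℝ)| * (k1 : ℝ) ^ 2) * t)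
    have h2 := h1.const_mul SB
    rw [mul_zero] at h2
    refine h2.congr fun n => ?_
    rw [mul_div_assoc]
  have hzero : ‖ρhat t (k1, k2)‖ ≤ 0 := ge_of_tendsto h0 (Filter.Eventually.of_forall hle)
  simpa using le_antisymm hzero (norm_nonneg _)
end
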